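/- arXiv:0804.4365 — 8 statements merged into one kernel-verified Lean document; each statement's English description precedes it below -/
import Mathlib

section
/- Let p₁, …, p_k be distinct prime numbers. Then the 2^k real numbers ∏_{i∈I} √p_i, as I ranges over all subsets of {1, …, k} (with the empty product equal to 1), are linearly independent over the rationals ℚ. -/
open Finset

noncomputable def sqF (t : Finset ℕ) : ℝ := ∏ q ∈ t, Real.sqrt q

noncomputable def Vsp (s : Finset ℕ) : Submodule ℚ ℝ :=
  Submodule.span ℚ (sqF '' ↑s.powerset)

lemma sqF_mem {t s : Finset ℕ} (h : t ⊆ s) : sqF t ∈ Vsp s :=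
  Submodule.subset_span ⟨t, by simpa using h, rfl⟩

lemma one_mem_V (s : Finset ℕ) : (1 : ℝ) ∈ Vsp s := by
  have : sqF ∅ = 1 := by simp [sqF]
  simpa [this] using sqF_mem (Finset.empty_subset s)

lemma ratCast_mem_V (s : Finset ℕ) (q : ℚ) : (q : ℝ) ∈ Vsp s := by
  simpa using (Vsp s).smul_mem q (one_mem_V s)

lemma sqF_mul (t u : Finset ℕ) :
    sqF t * sqF u = ((∏ q ∈ t ∩ u, q : ℕ) : ℝ) * sqF ((t \ u) ∪ (u \ t)) := by
  have ht : t = (t ∩ u) ∪ (t \ u) := by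
    ext x; simp [Finset.mem_inter, Finset.mem_sdiff]; tauto
  have hu : u = (t ∩ u) ∪ (u \ t) := by
    ext x; simp [Finset.mem_inter, Finset.mem_sdiff]; tauto
  have d1 : Disjoint (t ∩ u) (t \ u) := by
    simp [Finset.disjoint_left, Finset.mem_sdiff]; tauto
  have d2 : Disjoint (t ∩ u) (u \ t) := by
    simp [Finset.disjoint_left, Finset.mem_sdiff]; tauto
  have d3 : Disjoint (t \ u) (u \ t) := by
    simp [Finset.disjoint_left, Finset.mem_sdiff]; tauto
  have key : sqF (t ∩ u) * sqF (t ∩ u) = ((∏ q ∈ t ∩ u, q : ℕ) : ℝ) := by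
    rw [sqF, ← Finset.prod_mul_distrib]
    push_cast
    exact Finset.prod_congr rfl fun q _ => Real.mul_self_sqrt (Nat.cast_nonneg q)
  have e1 : sqF t = sqF (t ∩ u) * sqF (t \ u) := by
    conv_lhs => rw [ht]
    rw [sqF, Finset.prod_union d1]; rfl
  have e2 : sqF u = sqF (t ∩ u) * sqF (u \ t) := by
    conv_lhs => rw [hu]
    rw [sqF, Finset.prod_union d2]; rfl
  calc sqF t * sqF u
      = (sqF (t ∩ u) * sqF (t \ u)) * (sqF (t ∩ u) * sqF (u \ t)) := by
        rw [e1, e2]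
    _ = (sqF (t ∩ u) * sqF (t ∩ u)) * (sqF (t \ u) * sqF (u \ t)) := by ring
    _ = ((∏ q ∈ t ∩ u, q : ℕ) : ℝ) * sqF ((t \ u) ∪ (u \ t)) := by
        rw [key, sqF, sqF, sqF, ← Finset.prod_union d3]

lemma mul_mem_V {s : Finset ℕ} {x y : ℝ} (hx : x ∈ Vsp s) (hy : y ∈ Vsp s) :
    x * y ∈ Vsp s := by
  induction hx using Submodule.span_induction with
  | mem g hg =>
    obtain ⟨t, ht, rfl⟩ := hg
    simp only [Finset.coe_powerset, Set.mem_preimage, Set.mem_setOf_eq] at ht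
    induction hy using Submodule.span_induction with
    | mem g' hg' =>
      obtain ⟨u, hu, rfl⟩ := hg'
      simp only [Finset.coe_powerset, Set.mem_preimage, Set.mem_setOf_eq] at hu
      rw [sqF_mul]
      have hsub : (t \ u) ∪ (u \ t) ⊆ s := by
        intro x hx
        rcases Finset.mem_union.1 hx with h | h
        · exact ht (Finset.mem_sdiff.1 h).1
        · exact hu (Finset.mem_sdiff.1 h).1
      have : ((∏ q ∈ t ∩ u, q : ℕ) : ℝ) * sqF ((t \ u) ∪ (u \ t))
          = ((∏ q ∈ t ∩ u, q : ℕ) : ℚ) • sqF ((t \ u) ∪ (u \ t)) := by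
        rw [Rat.smul_def]; push_cast; ring
      rw [this]
      exact (Vsp s).smul_mem _ (sqF_mem hsub)
    | zero => simpa using (Vsp s).zero_mem
    | add y z _ _ h1 h2 => rw [mul_add]; exact (Vsp s).add_mem h1 h2
    | smul r y _ h => rw [mul_smul_comm]; exact (Vsp s).smul_mem r h
  | zero => simpa using (Vsp s).zero_mem
  | add y z _ _ h1 h2 => rw [add_mul]; exact (Vsp s).add_mem h1 h2
  | smul r y _ h => rw [smul_mul_assoc]; exact (Vsp s).smul_mem r h

lemma inv_mem_V {s : Finset ℕ} {x : ℝ} (hx : x ∈ Vsp s) (hx0 : x ≠ 0) :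
    x⁻¹ ∈ Vsp s := by
  have hfin : FiniteDimensional ℚ (Vsp s) :=
    FiniteDimensional.span_of_finite ℚ ((s.powerset.finite_toSet).image sqF)
  let L : Vsp s →ₗ[ℚ] Vsp s :=
    { toFun := fun y => ⟨x * y, mul_mem_V hx y.2⟩
      map_add' := fun y z => by ext; simp [mul_add]
      map_smul' := fun r y => by ext; simp [mul_smul_comm] }
  have hinj : Function.Injective L := by
    intro y z h
    have : x * (y : ℝ) = x * (z : ℝ) := congrArg Subtype.val h
    exact Subtype.ext (mul_left_cancel₀ hx0 this)
  have hsurj := LinearMap.injective_iff_surjective.1 hinj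
  obtain ⟨y, hy⟩ := hsurj ⟨1, one_mem_V s⟩
  have hxy : x * (y : ℝ) = 1 := congrArg Subtype.val hy
  have : x⁻¹ = (y : ℝ) := by field_simp [hx0] at hxy ⊢; linarith [hxy]
  rw [this]; exact y.2

lemma decomp_V {a : ℕ} {s : Finset ℕ} (ha : a ∉ s) {x : ℝ}
    (hx : x ∈ Vsp (insert a s)) :
    ∃ A ∈ Vsp s, ∃ B ∈ Vsp s, x = A + Real.sqrt a * B := by
  induction hx using Submodule.span_induction with
  | mem g hg =>
    obtain ⟨t, ht, rfl⟩ := hg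
    simp only [Finset.coe_powerset, Set.mem_preimage, Set.mem_setOf_eq] at ht
    by_cases hat : a ∈ t
    · refine ⟨0, (Vsp s).zero_mem, sqF (t.erase a), sqF_mem ?_, ?_⟩
      · intro x hx
        rcases Finset.mem_insert.1 (ht (Finset.mem_of_mem_erase hx)) with h | h
        · exact absurd (h ▸ hx) (Finset.notMem_erase a t)
        · exact h
      · have : t = insert a (t.erase a) := (Finset.insert_erase hat).symm
        rw [zero_add]
        conv_lhs => rw [this]
        rw [sqF, Finset.prod_insert (Finset.notMem_erase a t)]; rfl
    · refine ⟨sqF t, sqF_mem ?_, 0, (Vsp s).zero_mem, by ring⟩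
      intro x hx
      rcases Finset.mem_insert.1 (ht hx) with h | h
      · exact absurd (h ▸ hx) hat
      · exact h
  | zero => exact ⟨0, (Vsp s).zero_mem, 0, (Vsp s).zero_mem, by ring⟩
  | add y z _ _ h1 h2 =>
    obtain ⟨A1, hA1, B1, hB1, rfl⟩ := h1
    obtain ⟨A2, hA2, B2, hB2, rfl⟩ := h2
    exact ⟨A1 + A2, (Vsp s).add_mem hA1 hA2, B1 + B2, (Vsp s).add_mem hB1 hB2, by ring⟩
  | smul r y _ h =>
    obtain ⟨A, hA, B, hB, rfl⟩ := h
    exact ⟨r • A, (Vsp s).smul_mem r hA, r • B, (Vsp s).smul_mem r hB, by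
      simp [Rat.smul_def]; ring⟩

lemma key_induction (s : Finset ℕ) :
    (∀ q ∈ s, Nat.Prime q) →
    (∀ c : Finset ℕ → ℚ, ∑ t ∈ s.powerset, c t • sqF t = 0 → ∀ t ∈ s.powerset, c t = 0)
    ∧ (∀ d : ℕ, Squarefree d → 1 < d → (∀ q ∈ s, ¬ q ∣ d) → Real.sqrt d ∉ Vsp s) := by
  induction s using Finset.induction_on with
  | empty =>
    intro _
    constructor
    · intro c hc t ht
      simp only [Finset.powerset_empty, Finset.sum_singleton] at hc
      simp only [Finset.powerset_empty, Finset.mem_singleton] at ht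
      subst ht
      have : sqF (∅ : Finset ℕ) = 1 := by simp [sqF]
      rw [this] at hc
      simpa using hc
    · intro d hsf hd1 _ hmem
      have hirr : Irrational (Real.sqrt d) := by
        rw [irrational_sqrt_natCast_iff]
        intro ⟨m, hm⟩
        have : m * m ∣ d := hm ▸ dvd_refl d
        have hm1 := Nat.isUnit_iff.1 (hsf m this)
        rw [hm1] at hm
        omega
      have : Vsp (∅ : Finset ℕ) = Submodule.span ℚ {(1 : ℝ)} := by
        unfold Vsp
        congr 1
        simp [sqF]
      rw [this, Submodule.mem_span_singleton] at hmem
      obtain ⟨r, hr⟩ := hmem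
      exact hirr ⟨r, by rw [← hr]; simp [Rat.smul_def]⟩
  | @insert a s ha ih =>
    intro hs
    have hs' : ∀ q ∈ s, Nat.Prime q := fun q hq => hs q (Finset.mem_insert_of_mem hq)
    obtain ⟨ihP, ihQ⟩ := ih hs'
    have hap : Nat.Prime a := hs a (Finset.mem_insert_self a s)
    have haQ : Real.sqrt a ∉ Vsp s := by
      refine ihQ a hap.squarefree hap.one_lt (fun q hq hdvd => ?_)
      have : q = a := (Nat.prime_dvd_prime_iff_eq (hs' q hq) hap).1 hdvd
      exact ha (this ▸ hq)
    -- sum splitting helper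
    have hsplit : ∀ c : Finset ℕ → ℚ,
        ∑ t ∈ (insert a s).powerset, c t • sqF t =
        (∑ t ∈ s.powerset, c t • sqF t) +
        Real.sqrt a * ∑ t ∈ s.powerset, c (insert a t) • sqF t := by
      intro c
      rw [Finset.powerset_insert, Finset.sum_union, Finset.sum_image, Finset.mul_sum]
      · congr 1
        refine Finset.sum_congr rfl fun t ht => ?_
        have hat : a ∉ t := fun h => ha (Finset.mem_powerset.1 ht h)
        rw [sqF, Finset.prod_insert hat]
        rw [mul_smul_comm]
        rfl
      · intro t ht u hu h
        have hat : a ∉ t := fun hh => ha (Finset.mem_powerset.1 ht hh)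
        have hau : a ∉ u := fun hh => ha (Finset.mem_powerset.1 hu hh)
        have := congrArg (Finset.erase · a) h
        simpa [Finset.erase_insert hat, Finset.erase_insert hau] using this
      · rw [Finset.disjoint_left]
        intro t ht htm
        obtain ⟨u, hu, rfl⟩ := Finset.mem_image.1 htm
        exact ha (Finset.mem_powerset.1 ht (Finset.mem_insert_self a u))
    constructor
    · intro c hc
      rw [hsplit c] at hc
      set A := ∑ t ∈ s.powerset, c t • sqF t with hAdef
      set B := ∑ t ∈ s.powerset, c (insert a t) • sqF t with hBdef
      have hA : A ∈ Vsp s := Submodule.sum_mem _ fun t ht =>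
        (Vsp s).smul_mem _ (sqF_mem (Finset.mem_powerset.1 ht))
      have hB : B ∈ Vsp s := Submodule.sum_mem _ fun t ht =>
        (Vsp s).smul_mem _ (sqF_mem (Finset.mem_powerset.1 ht))
      have hB0 : B = 0 := by
        by_contra h
        have heq : Real.sqrt a = -A * B⁻¹ := by
          field_simp
          linarith [hc]
        exact haQ (heq ▸ mul_mem_V ((Vsp s).neg_mem hA) (inv_mem_V hB h))
      have hA0 : A = 0 := by rw [hB0] at hc; simpa using hc
      have h1 : ∀ t ∈ s.powerset, c t = 0 := ihP c hA0
      have h2 : ∀ t ∈ s.powerset, c (insert a t) = 0 :=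
        ihP (fun t => c (insert a t)) hB0
      intro t ht
      rw [Finset.mem_powerset] at ht
      by_cases hat : a ∈ t
      · have hsub : t.erase a ⊆ s := by
          intro x hx
          rcases Finset.mem_insert.1 (ht (Finset.mem_of_mem_erase hx)) with h | h
          · exact absurd (h ▸ hx) (Finset.notMem_erase a t)
          · exact h
        have := h2 (t.erase a) (Finset.mem_powerset.2 hsub)
        rwa [Finset.insert_erase hat] at this
      · have hsub : t ⊆ s := fun x hx => by
          rcases Finset.mem_insert.1 (ht hx) with h | h
          · exact absurd (h ▸ hx) hat
          · exact h
        exact h1 t (Finset.mem_powerset.2 hsub)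
    · intro d hsf hd1 hdvd hmem
      obtain ⟨A, hA, B, hB, hx⟩ := decomp_V ha hmem
      have hdnd : ∀ q ∈ s, ¬ q ∣ d := fun q hq => hdvd q (Finset.mem_insert_of_mem hq)
      by_cases hB0 : B = 0
      · rw [hB0] at hx
        simp only [mul_zero, add_zero] at hx
        exact ihQ d hsf hd1 hdnd (hx ▸ hA)
      have hd0 : (0:ℝ) ≤ (d:ℝ) := Nat.cast_nonneg d
      have ha0 : (0:ℝ) ≤ (a:ℝ) := Nat.cast_nonneg a
      have hsq : 2*A*B*Real.sqrt a = (d:ℝ) - A^2 - a*B^2 := by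
        have h1 : Real.sqrt d ^ 2 = (d:ℝ) := Real.sq_sqrt hd0
        have h2 : Real.sqrt a ^ 2 = (a:ℝ) := Real.sq_sqrt ha0
        have := congrArg (· ^ 2) hx
        rw [h1] at this
        nlinarith [this, h2]
      by_cases hA0 : A = 0
      · -- sqrt(d*a) = a*B ∈ Vsp s, contradiction
        have hand : ¬ a ∣ d := hdvd a (Finset.mem_insert_self a s)
        have hcop : Nat.Coprime d a := ((Nat.Prime.coprime_iff_not_dvd hap).2 hand).symm
        have hsfda : Squarefree (d * a) := (Nat.squarefree_mul hcop).2 ⟨hsf, hap.squarefree⟩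
        have hda1 : 1 < d * a := lt_of_lt_of_le hd1 (Nat.le_mul_of_pos_right d hap.pos)
        have hdvd' : ∀ q ∈ s, ¬ q ∣ d * a := by
          intro q hq hqda
          rcases (Nat.Prime.dvd_mul (hs' q hq)).1 hqda with h | h
          · exact hdnd q hq h
          · exact ha (((Nat.prime_dvd_prime_iff_eq (hs' q hq) hap).1 h) ▸ hq)
        refine ihQ (d * a) hsfda hda1 hdvd' ?_
        have hsqrtda : Real.sqrt (d * a : ℕ) = Real.sqrt d * Real.sqrt a := by
          push_cast
          rw [Real.sqrt_mul hd0]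
        rw [hsqrtda, hx, hA0, zero_add]
        have : Real.sqrt a * B * Real.sqrt a = (a:ℝ) * B := by
          rw [mul_comm (Real.sqrt a) B, mul_assoc, Real.mul_self_sqrt ha0]; ring
        rw [this]
        have : (a:ℝ) * B = ((a:ℚ):ℝ) * B := by push_cast; ring
        rw [this, ← Rat.smul_def]
        exact (Vsp s).smul_mem _ hB
      · -- sqrt a ∈ Vsp s, contradiction
        have h2AB : (2*A*B : ℝ) ≠ 0 := by
          intro h
          rcases mul_eq_zero.1 h with h' | h'
          · rcases mul_eq_zero.1 h' with h'' | h''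
            · norm_num at h''
            · exact hA0 h''
          · exact hB0 h'
        have heq : Real.sqrt a = ((d:ℝ) - A^2 - a*B^2) * (2*A*B)⁻¹ := by
          rw [← hsq]; field_simp
        refine haQ (heq ▸ mul_mem_V ?_ (inv_mem_V ?_ h2AB))
        · have hdm : (d:ℝ) ∈ Vsp s := by
            have : (d:ℝ) = ((d:ℚ):ℝ) := by push_cast; ring
            rw [this]; exact ratCast_mem_V s _
          have ham : (a:ℝ) * B^2 ∈ Vsp s := by
            have : (a:ℝ) * B^2 = ((a:ℚ):ℝ) * (B * B) := by push_cast; ring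
            rw [this, ← Rat.smul_def]
            exact (Vsp s).smul_mem _ (mul_mem_V hB hB)
          have hA2 : A^2 ∈ Vsp s := by rw [sq]; exact mul_mem_V hA hA
          exact (Vsp s).sub_mem ((Vsp s).sub_mem hdm hA2) ham
        · have : (2*A*B : ℝ) = ((2:ℚ):ℝ) * (A * B) := by push_cast; ring
          rw [this, ← Rat.smul_def]
          exact (Vsp s).smul_mem _ (mul_mem_V hA hB)

/-- Products of square roots of distinct primes over all subsets are
linearly independent over `ℚ`. -/
theorem sqrt_prime_products_linearIndependent
    (k : ℕ) (p : Fin k → ℕ) (hp : ∀ i, Nat.Prime (p i))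
    (hinj : Function.Injective p) :
    LinearIndependent ℚ (fun I : Finset (Fin k) => ∏ i ∈ I, Real.sqrt (p i)) := by
  classical
  set s : Finset ℕ := Finset.image p Finset.univ with hs
  have hsp : ∀ q ∈ s, Nat.Prime q := by
    intro q hq
    obtain ⟨i, _, rfl⟩ := Finset.mem_image.1 hq
    exact hp i
  obtain ⟨P, _⟩ := key_induction s hsp
  rw [Fintype.linearIndependent_iff]
  intro g hg I
  have hv : ∀ I : Finset (Fin k), (∏ i ∈ I, Real.sqrt (p i)) = sqF (I.image p) := by
    intro I
    rw [sqF, Finset.prod_image (fun x _ y _ h => hinj h)]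
  set c : Finset ℕ → ℚ := fun t => g (t.preimage p hinj.injOn) with hc
  have hpre : ∀ I : Finset (Fin k), (I.image p).preimage p hinj.injOn = I := by
    intro I
    ext i
    simp only [Finset.mem_preimage, Finset.mem_image]
    constructor
    · rintro ⟨j, hj, h⟩
      exact hinj h ▸ hj
    · intro hi
      exact ⟨i, hi, rfl⟩
  have hsum : ∑ t ∈ s.powerset, c t • sqF t = 0 := by
    rw [← hg]
    refine (Finset.sum_nbij' (fun I => I.image p)
      (fun t => t.preimage p hinj.injOn) ?_ ?_ ?_ ?_ ?_).symm
    · intro I _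
      refine Finset.mem_powerset.2 ?_
      intro q hq
      obtain ⟨i, hi, rfl⟩ := Finset.mem_image.1 hq
      exact Finset.mem_image.2 ⟨i, Finset.mem_univ i, rfl⟩
    · intro t _
      exact Finset.mem_univ _
    · intro I _
      exact hpre I
    · intro t ht
      ext q
      simp only [Finset.mem_image, Finset.mem_preimage]
      constructor
      · rintro ⟨i, hi, rfl⟩; exact hi
      · intro hq
        obtain ⟨i, _, rfl⟩ := Finset.mem_image.1 (Finset.mem_powerset.1 ht hq)
        exact ⟨i, hq, rfl⟩
    · intro I _
      rw [hv I, hc]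
      simp only [hpre I]
  have hmem : I.image p ∈ s.powerset := by
    refine Finset.mem_powerset.2 ?_
    intro q hq
    obtain ⟨i, hi, rfl⟩ := Finset.mem_image.1 hq
    exact Finset.mem_image.2 ⟨i, Finset.mem_univ i, rfl⟩
  have := P c hsum (I.image p) hmem
  rw [← hpre I]
  exact this
end

section
/- Let p₁, …, p_k be distinct prime numbers and let F := ℚ(√p₁, √p₂, …, √p_k) ⊆ ℝ be the field obtained from ℚ by adjoining the k square roots √p_i. Then F has dimension 2^k as a vector space over ℚ, and the 2^k elements ∏_{i∈I} √p_i, as I ranges over all subsets of {1, …, k}, form a ℚ-basis of F. -/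
open IntermediateField

/-- The set `{u + v*r : u, v ∈ E}` as a subfield of `ℝ`, when `r*r ∈ E` but `r ∉ E`. -/
noncomputable def quadSubfield (E : Subfield ℝ) (r : ℝ) (hr2 : r * r ∈ E) (hr : r ∉ E) :
    Subfield ℝ where
  carrier := {x | ∃ u ∈ E, ∃ v ∈ E, x = u + v * r}
  zero_mem' := ⟨0, E.zero_mem, 0, E.zero_mem, by ring⟩
  one_mem' := ⟨1, E.one_mem, 0, E.zero_mem, by ring⟩
  add_mem' := by
    rintro a b ⟨u, hu, v, hv, rfl⟩ ⟨u', hu', v', hv', rfl⟩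
    exact ⟨u + u', add_mem hu hu', v + v', add_mem hv hv', by ring⟩
  neg_mem' := by
    rintro a ⟨u, hu, v, hv, rfl⟩
    exact ⟨-u, neg_mem hu, -v, neg_mem hv, by ring⟩
  mul_mem' := by
    rintro a b ⟨u, hu, v, hv, rfl⟩ ⟨u', hu', v', hv', rfl⟩
    exact ⟨u * u' + v * v' * (r * r), add_mem (mul_mem hu hu') (mul_mem (mul_mem hv hv') hr2),
      u * v' + u' * v, add_mem (mul_mem hu hv') (mul_mem hu' hv), by ring⟩
  inv_mem' := by
    rintro x ⟨u, hu, v, hv, rfl⟩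
    by_cases h0 : u + v * r = 0
    · rw [h0]
      exact ⟨0, E.zero_mem, 0, E.zero_mem, by simp⟩
    · set d : ℝ := u * u - v * v * (r * r) with hd_def
      have hdE : d ∈ E := sub_mem (mul_mem hu hu) (mul_mem (mul_mem hv hv) hr2)
      have hd : d ≠ 0 := by
        intro hd0
        rw [hd_def] at hd0
        by_cases hv0 : v = 0
        · apply h0
          have hu0 : u = 0 := by
            rw [hv0] at hd0
            have : u * u = 0 := by linarith
            exact mul_self_eq_zero.mp this
          simp [hu0, hv0]
        · have : (v * r - u) * (v * r + u) = 0 := by nlinarith [hd0]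
          rcases mul_eq_zero.mp this with h | h
          · have : r = u / v := by field_simp; linarith
            exact hr (this ▸ div_mem hu hv)
          · have : r = -u / v := by field_simp; linarith
            exact hr (this ▸ div_mem (neg_mem hu) hv)
      have key : (u + v * r) * (u * d⁻¹ + (-(v * d⁻¹)) * r) = 1 := by
        have h1 : (u + v * r) * (u * d⁻¹ + (-(v * d⁻¹)) * r)
            = (u * u - v * v * (r * r)) * d⁻¹ := by ring
        rw [h1, ← hd_def, mul_inv_cancel₀ hd]
      exact ⟨u * d⁻¹, mul_mem hu (inv_mem hdE), -(v * d⁻¹),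
        neg_mem (mul_mem hv (inv_mem hdE)), (inv_eq_of_mul_eq_one_right key).symm ▸ rfl⟩

lemma mem_quad (E : IntermediateField ℚ ℝ) {r : ℝ} (hr2 : r * r ∈ E) (hr : r ∉ E)
    {S : Set ℝ} (hS : S ⊆ (E : Set ℝ)) {x : ℝ}
    (hx : x ∈ IntermediateField.adjoin ℚ (S ∪ {r})) :
    ∃ u ∈ E, ∃ v ∈ E, x = u + v * r := by
  let K : IntermediateField ℚ ℝ :=
    (quadSubfield E.toSubfield r hr2 hr).toIntermediateField
      (fun q => ⟨algebraMap ℚ ℝ q, E.algebraMap_mem q, 0, E.zero_mem, by ring⟩)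
  have hle : IntermediateField.adjoin ℚ (S ∪ {r}) ≤ K := by
    rw [IntermediateField.adjoin_le_iff]
    rintro y (hy | hy)
    · exact ⟨y, hS hy, 0, E.zero_mem, by ring⟩
    · rcases hy with rfl
      exact ⟨0, E.zero_mem, 1, E.one_mem, by ring⟩
  exact hle hx

section
variable {k : ℕ} {p : Fin k → ℕ} (hp : ∀ i, Nat.Prime (p i)) (hinj : Function.Injective p)
include hp hinj

lemma prod_primes_not_square {t : Finset (Fin k)} (ht : t.Nonempty) :
    ¬ IsSquare (∏ i ∈ t, p i) := by
  obtain ⟨a, ha⟩ := ht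
  have hfact : (∏ i ∈ t, p i).factorization (p a) = 1 := by
    rw [Nat.factorization_prod (fun i _ => (hp i).ne_zero)]
    rw [Finset.sum_apply']
    have : ∀ i ∈ t, (p i).factorization (p a) = if i = a then 1 else 0 := by
      intro i _
      rw [(hp i).factorization, Finsupp.single_apply]
      congr 1
      simp [hinj.eq_iff]
    rw [Finset.sum_congr rfl this, Finset.sum_ite_eq' t a (fun _ => 1), if_pos ha]
  rintro ⟨m, hm⟩
  have hm0 : m ≠ 0 := by
    rintro rfl
    simp only [mul_zero] at hm
    exact absurd hm (Finset.prod_ne_zero_iff.mpr (fun i _ => (hp i).ne_zero))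
  rw [hm, Nat.factorization_mul hm0 hm0] at hfact
  simp only [Finsupp.add_apply] at hfact
  omega

lemma sqrt_prod_not_mem : ∀ s t : Finset (Fin k), Disjoint s t → t.Nonempty →
    Real.sqrt ((∏ i ∈ t, p i : ℕ) : ℝ) ∉
      IntermediateField.adjoin ℚ ((fun i => Real.sqrt (p i)) '' ↑s) := by
  intro s
  induction s using Finset.induction_on with
  | empty =>
    intro t _ ht hmem
    rw [Finset.coe_empty, Set.image_empty, IntermediateField.adjoin_empty,
      IntermediateField.mem_bot] at hmem
    obtain ⟨q, hq⟩ := hmem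
    refine (irrational_sqrt_natCast_iff.mpr (prod_primes_not_square hp hinj ht)) ⟨q, ?_⟩
    rw [← hq, eq_ratCast]
  | @insert a s ha ih =>
    intro t hdisj ht hmem
    set Fs := IntermediateField.adjoin ℚ ((fun i => Real.sqrt (p i)) '' ↑s) with hFs
    have hat : a ∉ t := Finset.disjoint_left.mp hdisj (Finset.mem_insert_self a s)
    have hst : Disjoint s t := hdisj.mono_left (Finset.subset_insert a s)
    set r := Real.sqrt (p a) with hr_def
    have hra : r ∉ Fs := by
      have := ih {a} (by simpa using ha) ⟨a, Finset.mem_singleton_self a⟩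
      simpa using this
    have hqFs : ((p a : ℕ) : ℝ) ∈ Fs := by
      have := Fs.algebraMap_mem ((p a : ℕ) : ℚ)
      rwa [eq_ratCast, Rat.cast_natCast] at this
    have hr2 : r * r ∈ Fs := by
      rw [hr_def, Real.mul_self_sqrt (by positivity)]
      exact hqFs
    -- rewrite the adjoined set
    have himg : (fun i => Real.sqrt (p i)) '' ↑(insert a s)
        = ((fun i => Real.sqrt (p i)) '' ↑s) ∪ {r} := by
      rw [Finset.coe_insert, Set.image_insert_eq, Set.union_singleton]
    rw [himg] at hmem
    obtain ⟨u, hu, v, hv, huv⟩ :=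
      mem_quad Fs hr2 hra (IntermediateField.subset_adjoin ℚ _) hmem
    set m : ℝ := ((∏ i ∈ t, p i : ℕ) : ℝ) with hm_def
    have hm0 : (0 : ℝ) ≤ m := by positivity
    have hmFs : m ∈ Fs := by
      have := Fs.algebraMap_mem ((∏ i ∈ t, p i : ℕ) : ℚ)
      rwa [eq_ratCast, Rat.cast_natCast] at this
    have hsq : m = (u * u + v * v * (r * r)) + (2 * u * v) * r := by
      have h1 : Real.sqrt m * Real.sqrt m = m := Real.mul_self_sqrt hm0
      rw [huv] at h1
      rw [← h1]; ring
    have h2Fs : (2 : ℝ) ∈ Fs := by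
      have := Fs.algebraMap_mem (2 : ℚ)
      rwa [eq_ratCast, Rat.cast_ofNat] at this
    have huv0 : u = 0 ∨ v = 0 := by
      by_contra hcon
      push_neg at hcon
      obtain ⟨hu0, hv0⟩ := hcon
      apply hra
      have : r = (m - u * u - v * v * (r * r)) / (2 * u * v) := by
        field_simp
        linarith [hsq]
      rw [this]
      exact div_mem (sub_mem (sub_mem hmFs (mul_mem hu hu))
        (mul_mem (mul_mem hv hv) hr2)) (mul_mem (mul_mem h2Fs hu) hv)
    rcases huv0 with hu0 | hv0
    · -- sqrt m = v * r, so sqrt ((p a) * m) = v * (p a) ∈ Fs, contradiction with ih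
      have hvr : Real.sqrt m = v * r := by rw [huv, hu0]; ring
      have : Real.sqrt ((∏ i ∈ insert a t, p i : ℕ) : ℝ) ∈ Fs := by
        have hprod : ((∏ i ∈ insert a t, p i : ℕ) : ℝ) = ((p a : ℕ) : ℝ) * m := by
          rw [Finset.prod_insert hat, hm_def]; push_cast; ring
        rw [hprod, Real.sqrt_mul (by positivity), ← hr_def, hvr]
        have : r * (v * r) = v * (r * r) := by ring
        rw [this]
        exact mul_mem hv hr2
      exact ih (insert a t) (Finset.disjoint_insert_right.mpr ⟨ha, hst⟩)
        ⟨a, Finset.mem_insert_self a t⟩ this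
    · have : Real.sqrt m = u := by rw [huv, hv0]; ring
      exact ih t hst ht (this ▸ hu)

end
open IntermediateField Polynomial in
lemma finrank_adjoin_sqrt_eq_two (K : IntermediateField ℚ ℝ) {r : ℝ} (c : ℚ)
    (hc : (c : ℝ) = r * r) (hr : r ∉ K) :
    Module.finrank K K⟮r⟯ = 2 := by
  set P : Polynomial K := X ^ 2 - C (algebraMap ℚ K c) with hP
  have hPmonic : P.Monic := monic_X_pow_sub_C _ (by norm_num)
  have haeval : Polynomial.aeval r P = 0 := by
    rw [hP]
    simp only [map_sub, map_pow, aeval_X, aeval_C]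
    have : (algebraMap (↥K) ℝ) ((algebraMap ℚ ↥K) c) = (c : ℝ) := by
      rw [← IsScalarTower.algebraMap_apply ℚ K ℝ, eq_ratCast]
    rw [this, hc, sq]
    ring
  have hint : IsIntegral K r := ⟨P, hPmonic, haeval⟩
  have hdvd : minpoly K r ∣ P := minpoly.dvd K r haeval
  have hdeg_le : (minpoly K r).natDegree ≤ 2 := by
    have := Polynomial.natDegree_le_of_dvd hdvd hPmonic.ne_zero
    rwa [hP, natDegree_X_pow_sub_C] at this
  have hdeg_pos : 0 < (minpoly K r).natDegree := minpoly.natDegree_pos hint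
  have hdeg_ne_one : (minpoly K r).natDegree ≠ 1 := by
    intro h1
    have : r ∈ (algebraMap (↥K) ℝ).range := by
      have := minpoly.natDegree_eq_one_iff.mp h1
      exact this
    obtain ⟨y, hy⟩ := this
    exact hr (hy ▸ y.2)
  rw [IntermediateField.adjoin.finrank hint]
  omega

section
variable {k : ℕ} {p : Fin k → ℕ} (hp : ∀ i, Nat.Prime (p i)) (hinj : Function.Injective p)
include hp hinj

set_option synthInstance.maxHeartbeats 1000000 in
set_option maxHeartbeats 1000000 in
open IntermediateField in
lemma finrank_adjoin_sqrt_primes : ∀ s : Finset (Fin k),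
    Module.finrank ℚ (IntermediateField.adjoin ℚ ((fun i => Real.sqrt (p i)) '' ↑s))
      = 2 ^ s.card := by
  intro s
  induction s using Finset.induction_on with
  | empty =>
    rw [Finset.coe_empty, Set.image_empty, IntermediateField.adjoin_empty]
    simp [IntermediateField.finrank_bot]
  | @insert a s ha ih =>
    set Fs := IntermediateField.adjoin ℚ ((fun i => Real.sqrt (p i)) '' ↑s) with hFs
    set r := Real.sqrt (p a) with hr_def
    have hra : r ∉ Fs := by
      have := sqrt_prod_not_mem hp hinj s {a} (by simpa using ha)
        ⟨a, Finset.mem_singleton_self a⟩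
      simpa using this
    have hrank2 : Module.finrank Fs Fs⟮r⟯ = 2 := by
      refine finrank_adjoin_sqrt_eq_two Fs ((p a : ℕ) : ℚ) ?_ hra
      rw [hr_def, Real.mul_self_sqrt (by positivity)]
      push_cast
      rfl
    have hFD : FiniteDimensional ℚ Fs := by
      refine FiniteDimensional.of_finrank_pos ?_
      rw [ih]
      positivity
    have himg : (fun i => Real.sqrt (p i)) '' ↑(insert a s)
        = ((fun i => Real.sqrt (p i)) '' ↑s) ∪ {r} := by
      rw [Finset.coe_insert, Set.image_insert_eq, Set.union_singleton]
    have hadj : (IntermediateField.adjoin Fs {r}).restrictScalars ℚ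
        = IntermediateField.adjoin ℚ (((fun i => Real.sqrt (p i)) '' ↑s) ∪ {r}) :=
      IntermediateField.adjoin_adjoin_left ℚ _ _
    rw [himg, ← hadj]
    have : Module.finrank ℚ ((IntermediateField.adjoin Fs {r}).restrictScalars ℚ)
        = Module.finrank ℚ Fs * Module.finrank Fs Fs⟮r⟯ :=
      (Module.finrank_mul_finrank ℚ Fs Fs⟮r⟯).symm
    rw [this, ih, hrank2, Finset.card_insert_of_notMem ha]
    ring

end
section
variable {k : ℕ} {p : Fin k → ℕ} (hp : ∀ i, Nat.Prime (p i)) (hinj : Function.Injective p)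
include hp

open IntermediateField in
omit hp in
lemma prod_sqrt_mul_prod_sqrt (I J : Finset (Fin k)) :
    (∏ i ∈ I, Real.sqrt (p i)) * ∏ i ∈ J, Real.sqrt (p i)
      = ((∏ i ∈ I ∩ J, p i : ℕ) : ℚ) • ∏ i ∈ (I \ J) ∪ (J \ I), Real.sqrt (p i) := by
  have hI : (∏ i ∈ I, Real.sqrt (p i))
      = (∏ i ∈ I ∩ J, Real.sqrt (p i)) * ∏ i ∈ I \ J, Real.sqrt (p i) :=
    (Finset.prod_inter_mul_prod_diff I J _).symm
  have hJ : (∏ i ∈ J, Real.sqrt (p i))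
      = (∏ i ∈ I ∩ J, Real.sqrt (p i)) * ∏ i ∈ J \ I, Real.sqrt (p i) := by
    rw [Finset.inter_comm]
    exact (Finset.prod_inter_mul_prod_diff J I _).symm
  have hdisj : Disjoint (I \ J) (J \ I) := disjoint_sdiff_sdiff
  have hsq : (∏ i ∈ I ∩ J, Real.sqrt (p i)) * ∏ i ∈ I ∩ J, Real.sqrt (p i)
      = ((∏ i ∈ I ∩ J, p i : ℕ) : ℝ) := by
    rw [← Finset.prod_mul_distrib]
    push_cast
    exact Finset.prod_congr rfl fun i _ => Real.mul_self_sqrt (by positivity)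
  rw [hI, hJ, Finset.prod_union hdisj, Rat.smul_def, Rat.cast_natCast, ← hsq]
  ring

open IntermediateField Submodule in
lemma span_prod_sqrt_eq :
    Submodule.span ℚ (Set.range fun I : Finset (Fin k) => ∏ i ∈ I, Real.sqrt (p i))
      = Subalgebra.toSubmodule
          (IntermediateField.adjoin ℚ (Set.range fun i : Fin k => Real.sqrt (p i))).toSubalgebra := by
  set v : Finset (Fin k) → ℝ := fun I => ∏ i ∈ I, Real.sqrt (p i) with hv
  set F := IntermediateField.adjoin ℚ (Set.range fun i : Fin k => Real.sqrt (p i)) with hF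
  have hone : (1 : ℝ) ∈ Submodule.span ℚ (Set.range v) :=
    Submodule.subset_span ⟨∅, by rw [hv]; simp⟩
  have hmul : ∀ x y : ℝ, x ∈ Submodule.span ℚ (Set.range v)
      → y ∈ Submodule.span ℚ (Set.range v) → x * y ∈ Submodule.span ℚ (Set.range v) := by
    have key : Submodule.span ℚ (Set.range v) * Submodule.span ℚ (Set.range v)
        ≤ Submodule.span ℚ (Set.range v) := by
      rw [Submodule.span_mul_span]
      refine Submodule.span_le.mpr ?_
      rintro z ⟨x, ⟨I, rfl⟩, y, ⟨J, rfl⟩, rfl⟩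
      rw [hv]
      simp only
      rw [prod_sqrt_mul_prod_sqrt I J]
      exact Submodule.smul_mem _ _ (Submodule.subset_span ⟨_, rfl⟩)
    intro x y hx hy
    exact key (Submodule.mul_mem_mul hx hy)
  apply le_antisymm
  · refine Submodule.span_le.mpr ?_
    rintro x ⟨I, rfl⟩
    exact Subalgebra.prod_mem _ fun i _ => IntermediateField.subset_adjoin ℚ _ ⟨i, rfl⟩
  · intro x hx
    have halg : F.toSubalgebra = Algebra.adjoin ℚ (Set.range fun i : Fin k => Real.sqrt (p i)) := by
      refine IntermediateField.adjoin_toSubalgebra_of_isAlgebraic ?_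
      rintro y ⟨i, rfl⟩
      have hint : IsIntegral ℚ (Real.sqrt (p i)) := by
        refine ⟨Polynomial.X ^ 2 - Polynomial.C ((p i : ℕ) : ℚ),
          Polynomial.monic_X_pow_sub_C _ (by norm_num), ?_⟩
        simp only [Polynomial.eval₂_sub, Polynomial.eval₂_pow, Polynomial.eval₂_X,
          Polynomial.eval₂_C, eq_ratCast, Rat.cast_natCast]
        rw [sq, Real.mul_self_sqrt (Nat.cast_nonneg (p i)), sub_self]
      exact hint.isAlgebraic
    have hx' : x ∈ Algebra.adjoin ℚ (Set.range fun i : Fin k => Real.sqrt (p i)) := by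
      rw [← halg]; exact hx
    have hle : Algebra.adjoin ℚ (Set.range fun i : Fin k => Real.sqrt (p i))
        ≤ (Submodule.span ℚ (Set.range v)).toSubalgebra hone hmul := by
      refine Algebra.adjoin_le ?_
      rintro y ⟨i, rfl⟩
      exact Submodule.subset_span ⟨{i}, by rw [hv]; simp⟩
    exact hle hx'

end
set_option linter.unusedSectionVars false in
/-- The field `ℚ(√p₁, …, √p_k)` obtained by adjoining square roots of `k`
distinct primes has dimension `2^k` over `ℚ`, with basis the products
`∏_{i ∈ I} √pᵢ` indexed by subsets `I ⊆ {1, …, k}`. -/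
theorem adjoin_sqrt_primes_finrank_and_basis
    (k : ℕ) (p : Fin k → ℕ) (hp : ∀ i, Nat.Prime (p i))
    (hinj : Function.Injective p) :
    Module.finrank ℚ
        (IntermediateField.adjoin ℚ (Set.range fun i : Fin k => Real.sqrt (p i))) = 2 ^ k ∧
      ∃ b : Module.Basis (Finset (Fin k)) ℚ
          (IntermediateField.adjoin ℚ (Set.range fun i : Fin k => Real.sqrt (p i))),
        ∀ I : Finset (Fin k), (b I : ℝ) = ∏ i ∈ I, Real.sqrt (p i) := by
  set F := IntermediateField.adjoin ℚ (Set.range fun i : Fin k => Real.sqrt (p i)) with hF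
  have hset : (Set.range fun i : Fin k => Real.sqrt (p i))
      = (fun i => Real.sqrt (p i)) '' ↑(Finset.univ : Finset (Fin k)) := by
    simp
  have hrank : Module.finrank ℚ F = 2 ^ k := by
    rw [hF, hset, finrank_adjoin_sqrt_primes hp hinj Finset.univ, Finset.card_univ,
      Fintype.card_fin]
  refine ⟨hrank, ?_⟩
  set v : Finset (Fin k) → ℝ := fun I => ∏ i ∈ I, Real.sqrt (p i) with hv
  have hvF : ∀ I, v I ∈ F := fun I =>
    prod_mem fun i _ => IntermediateField.subset_adjoin ℚ _ ⟨i, rfl⟩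
  set w : Finset (Fin k) → F := fun I => ⟨v I, hvF I⟩ with hw
  have hspan := span_prod_sqrt_eq (p := p) hp
  have htop : ⊤ ≤ Submodule.span ℚ (Set.range w) := by
    rintro x -
    have hx : (x : ℝ) ∈ Submodule.span ℚ (Set.range v) := by
      rw [hv, hspan]
      exact x.2
    let lin : F →ₗ[ℚ] ℝ := F.val.toLinearMap
    have hcomp : Set.range v = lin '' Set.range w := by
      rw [← Set.range_comp]
      rfl
    rw [hcomp, ← Submodule.map_span] at hx
    obtain ⟨y, hy, hyx⟩ := Submodule.mem_map.mp hx
    have hyx' : y = x := Subtype.ext hyx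
    rwa [← hyx']
  have hcard : Fintype.card (Finset (Fin k)) = Module.finrank ℚ F := by
    rw [Fintype.card_finset, Fintype.card_fin, hrank]
  refine ⟨basisOfTopLeSpanOfCardEqFinrank w htop hcard, fun I => ?_⟩
  have hb : (basisOfTopLeSpanOfCardEqFinrank w htop hcard) I = w I := by
    rw [coe_basisOfTopLeSpanOfCardEqFinrank]
  rw [hb]
end

section
/- Let p₁, …, p_k be distinct prime numbers with k ≥ 1. Then √p_k does not belong to the field F' := ℚ(√p₁, √p₂, …, √p_{k−1}) (which is ℚ itself when k = 1). -/
open IntermediateField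

lemma mem_adjoin_sqrt_rep (F : IntermediateField ℚ ℝ) (α : ℝ) (hα : α * α ∈ F)
    {x : ℝ} (hx : x ∈ IntermediateField.adjoin F {α}) :
    ∃ a b : ℝ, a ∈ F ∧ b ∈ F ∧ x = a + b * α := by
  have hint : IsIntegral F α := by
    refine ⟨Polynomial.X ^ 2 - Polynomial.C ⟨α * α, hα⟩, ?_, ?_⟩
    · exact Polynomial.monic_X_pow_sub_C _ (by norm_num)
    · simp [sq]
  -- the span of {1, α} as a subalgebra
  let S : Subalgebra F ℝ :=
  { carrier := {x | ∃ a b : ℝ, a ∈ F ∧ b ∈ F ∧ x = a + b * α}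
    add_mem' := by
      rintro u v ⟨a, b, ha, hb, rfl⟩ ⟨c, d, hc, hd, rfl⟩
      exact ⟨a + c, b + d, add_mem ha hc, add_mem hb hd, by ring⟩
    mul_mem' := by
      rintro u v ⟨a, b, ha, hb, rfl⟩ ⟨c, d, hc, hd, rfl⟩
      refine ⟨a * c + b * d * (α * α), a * d + b * c,
        add_mem (mul_mem ha hc) (mul_mem (mul_mem hb hd) hα),
        add_mem (mul_mem ha hd) (mul_mem hb hc), by ring⟩
    one_mem' := ⟨1, 0, one_mem F, zero_mem F, by ring⟩
    algebraMap_mem' := fun r => ⟨r, 0, r.2, zero_mem F, by simp⟩ }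
  have hAdj : Algebra.adjoin F {α} ≤ S :=
    Algebra.adjoin_le (by rintro x (rfl : x = α); exact ⟨0, 1, zero_mem F, one_mem F, by ring⟩)
  have : x ∈ Algebra.adjoin F {α} := by
    have h := IntermediateField.adjoin_simple_toSubalgebra_of_isAlgebraic hint.isAlgebraic
    rw [← h]
    exact hx
  exact hAdj this

lemma sqrt_not_mem_adjoin_key (s : Finset ℕ) :
    ∀ (b : ℕ), (∀ q ∈ s, Nat.Prime q) → Squarefree b → 1 < b → (∀ q ∈ s, ¬ q ∣ b) →
    Real.sqrt b ∉ IntermediateField.adjoin ℚ ((fun n : ℕ => Real.sqrt n) '' ↑s) := by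
  induction s using Finset.induction_on with
  | empty =>
    intro b _ hsf hb _ hmem
    simp only [Finset.coe_empty, Set.image_empty, IntermediateField.adjoin_empty] at hmem
    rw [IntermediateField.mem_bot] at hmem
    have hirr : Irrational (Real.sqrt b) := by
      rw [irrational_sqrt_natCast_iff]
      rintro ⟨r, rfl⟩
      have hr := Nat.isUnit_iff.mp (hsf r dvd_rfl)
      rw [hr] at hb
      omega
    obtain ⟨q, hq⟩ := hmem
    exact hirr ⟨q, hq⟩
  | @insert a s' ha IH =>
    intro b hpr hsf hb hdvd hmem
    have hapr : Nat.Prime a := hpr a (Finset.mem_insert_self a s')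
    have hpr' : ∀ q ∈ s', Nat.Prime q := fun q hq => hpr q (Finset.mem_insert_of_mem hq)
    set F : IntermediateField ℚ ℝ :=
      IntermediateField.adjoin ℚ ((fun n : ℕ => Real.sqrt n) '' ↑s') with hF
    -- rewrite the adjoin of the inserted set
    have himg : (fun n : ℕ => Real.sqrt n) '' ↑(insert a s') =
        ((fun n : ℕ => Real.sqrt n) '' ↑s') ∪ {Real.sqrt a} := by
      rw [Finset.coe_insert, Set.image_insert_eq, Set.union_singleton]
    rw [himg, ← IntermediateField.adjoin_adjoin_left,
      IntermediateField.mem_restrictScalars] at hmem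
    have haa : (Real.sqrt a) * (Real.sqrt a) ∈ F := by
      rw [Real.mul_self_sqrt (by positivity)]
      exact_mod_cast IntermediateField.natCast_mem F a
    obtain ⟨x, y, hxF, hyF, hxy⟩ := mem_adjoin_sqrt_rep F (Real.sqrt a) haa hmem
    -- square the identity
    have hsq : (b : ℝ) = x * x + y * y * a + 2 * (x * y) * Real.sqrt a := by
      have h1 : Real.sqrt b * Real.sqrt b = (b : ℝ) := Real.mul_self_sqrt (by positivity)
      have h2 : Real.sqrt a * Real.sqrt a = (a : ℝ) := Real.mul_self_sqrt (by positivity)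
      rw [hxy] at h1
      nlinarith [h1, h2]
    by_cases hy : y = 0
    · -- √b ∈ F
      refine IH b hpr' hsf hb (fun q hq => hdvd q (Finset.mem_insert_of_mem hq)) ?_
      rw [hxy, hy]
      simpa using hxF
    by_cases hx : x = 0
    · -- √(b*a) ∈ F
      have hsalt : Real.sqrt (b * a : ℕ) = y * a := by
        push_cast
        have h2 : Real.sqrt a * Real.sqrt a = (a : ℝ) := Real.mul_self_sqrt (by positivity)
        rw [Real.sqrt_mul (by positivity), hxy, hx, zero_add, mul_assoc, h2]
      have hndvd : ¬ a ∣ b := hdvd a (Finset.mem_insert_self a s')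
      have hcop : Nat.Coprime b a := Nat.Coprime.symm ((Nat.Prime.coprime_iff_not_dvd hapr).mpr hndvd)
      refine IH (b * a) hpr' ?_ ?_ ?_ ?_
      · exact (Nat.squarefree_mul_iff.mpr ⟨hcop, hsf, hapr.squarefree⟩)
      · exact lt_of_lt_of_le hb (Nat.le_mul_of_pos_right _ hapr.pos)
      · intro q hq hqdvd
        rcases (hpr' q hq).prime.dvd_mul.mp hqdvd with h | h
        · exact hdvd q (Finset.mem_insert_of_mem hq) h
        · exact ha ((Nat.prime_dvd_prime_iff_eq (hpr' q hq) hapr).mp h ▸ hq)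
      · rw [hsalt]
        exact mul_mem hyF (by exact_mod_cast IntermediateField.natCast_mem F a)
    · -- √a ∈ F
      have hsa : Real.sqrt a = ((b : ℝ) - x * x - y * y * a) / (2 * (x * y)) := by
        field_simp
        linarith [hsq]
      refine IH a hpr' hapr.squarefree hapr.one_lt ?_ ?_
      · intro q hq hqdvd
        exact ha ((Nat.prime_dvd_prime_iff_eq (hpr' q hq) hapr).mp hqdvd ▸ hq)
      · rw [hsa]
        have hbF : ((b : ℝ)) ∈ F := by exact_mod_cast IntermediateField.natCast_mem F b
        have haF : ((a : ℝ)) ∈ F := by exact_mod_cast IntermediateField.natCast_mem F a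
        exact div_mem (sub_mem (sub_mem hbF (mul_mem hxF hxF)) (mul_mem (mul_mem hyF hyF) haF))
          (mul_mem (by exact_mod_cast IntermediateField.natCast_mem F 2) (mul_mem hxF hyF))


/-- If `p₁, …, p_k` are distinct primes (`k ≥ 1`), then `√p_k` does not belong to
the field `ℚ(√p₁, …, √p_{k−1})` (which is `ℚ` itself when `k = 1`). -/
theorem sqrt_prime_not_mem_adjoin
    (k : ℕ) (hk : 1 ≤ k) (p : Fin k → ℕ) (hp : ∀ i, Nat.Prime (p i))
    (hinj : Function.Injective p) :
    Real.sqrt (p ⟨k - 1, by omega⟩) ∉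
      IntermediateField.adjoin ℚ
        (Set.range fun i : Fin (k - 1) =>
          Real.sqrt (p (Fin.castLE (by omega : k - 1 ≤ k) i))) := by
  set s : Finset ℕ :=
    Finset.image (fun i : Fin (k - 1) => p (Fin.castLE (by omega : k - 1 ≤ k) i))
      Finset.univ with hs
  have hrange : (Set.range fun i : Fin (k - 1) =>
      Real.sqrt (p (Fin.castLE (by omega : k - 1 ≤ k) i)))
      = (fun n : ℕ => Real.sqrt n) '' ↑s := by
    rw [hs, Finset.coe_image, Finset.coe_univ, Set.image_univ, ← Set.range_comp]
    rfl
  rw [hrange]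
  refine sqrt_not_mem_adjoin_key s (p ⟨k - 1, by omega⟩) ?_
    (hp _).squarefree (hp _).one_lt ?_
  · intro q hq
    rw [hs] at hq
    obtain ⟨i, _, rfl⟩ := Finset.mem_image.mp hq
    exact hp _
  · intro q hq hdvd
    rw [hs] at hq
    obtain ⟨i, _, rfl⟩ := Finset.mem_image.mp hq
    have heq := (Nat.prime_dvd_prime_iff_eq (hp _) (hp _)).mp hdvd
    have := hinj heq
    have hi := i.isLt
    simp only [Fin.ext_iff, Fin.coe_castLE] at this
    omega
end

section
/- Let p₁, …, p_k be distinct prime numbers and F := ℚ(√p₁, …, √p_k) ⊆ ℝ. Then for every choice of signs s : {1, …, k} → {+1, −1} there exists exactly one field automorphism τ_s of F fixing ℚ with τ_s(√p_i) = s(i)√p_i for all i, every automorphism of F fixing ℚ is of this form, and consequently the Galois group of F over ℚ is an abelian group of order 2^k, generated by the automorphisms τ_i determined by τ_i(√p_j) = (−1)^{δ(i,j)} √p_j. -/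
/-- The field `ℚ(√p₁, …, √p_k)` generated over `ℚ` by the square roots of `k`
distinct primes, as an intermediate field of `ℝ/ℚ`. -/
noncomputable def sqrtAdjoin (k : ℕ) (p : Fin k → ℕ) : IntermediateField ℚ ℝ :=
  IntermediateField.adjoin ℚ (Set.range fun i : Fin k => Real.sqrt (p i))

open IntermediateField Polynomial
set_option synthInstance.maxHeartbeats 1000000
set_option maxHeartbeats 1000000

lemma isIntegral_sqrt_nat (n : ℕ) : IsIntegral ℚ (Real.sqrt n) := by
  refine ⟨X ^ 2 - C (n : ℚ), monic_X_pow_sub_C _ two_ne_zero, ?_⟩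
  simp [eval₂_sub, Real.sq_sqrt (Nat.cast_nonneg n)]

lemma mem_sqrtAdjoin (k : ℕ) (p : Fin k → ℕ) (i : Fin k) :
    Real.sqrt (p i) ∈ sqrtAdjoin k p :=
  subset_adjoin _ _ ⟨i, rfl⟩

lemma isIntegral_sqrt_mem (K : IntermediateField ℚ ℝ) (a : ℝ) (ha : a ∈ K) (h0 : 0 ≤ a) :
    IsIntegral K (Real.sqrt a) := by
  refine ⟨X ^ 2 - C ⟨a, ha⟩, monic_X_pow_sub_C _ two_ne_zero, ?_⟩
  have : (algebraMap K ℝ) ⟨a, ha⟩ = a := rfl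
  simp [eval₂_sub, this, Real.sq_sqrt h0]

/-- Elements of `K(√a)` have the form `x + y√a`. -/
lemma mem_adjoin_sqrt (K : IntermediateField ℚ ℝ) (a : ℝ) (ha : a ∈ K) (h0 : 0 ≤ a)
    (z : ℝ) (hz : z ∈ IntermediateField.adjoin K {Real.sqrt a}) :
    ∃ x y : ℝ, x ∈ K ∧ y ∈ K ∧ z = x + y * Real.sqrt a := by
  have hsq : Real.sqrt a * Real.sqrt a = a := Real.mul_self_sqrt h0
  set T : Subalgebra K ℝ :=
    { carrier := {z | ∃ x y : ℝ, x ∈ K ∧ y ∈ K ∧ z = x + y * Real.sqrt a}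
      mul_mem' := by
        rintro z z' ⟨x, y, hx, hy, rfl⟩ ⟨x', y', hx', hy', rfl⟩
        exact ⟨x * x' + y * y' * a, x * y' + y * x',
          add_mem (mul_mem hx hx') (mul_mem (mul_mem hy hy') ha),
          add_mem (mul_mem hx hy') (mul_mem hy hx'), by linear_combination (y * y') * hsq⟩
      one_mem' := ⟨1, 0, one_mem K, zero_mem K, by ring⟩
      add_mem' := by
        rintro z z' ⟨x, y, hx, hy, rfl⟩ ⟨x', y', hx', hy', rfl⟩
        exact ⟨x + x', y + y', add_mem hx hx', add_mem hy hy', by ring⟩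
      zero_mem' := ⟨0, 0, zero_mem K, zero_mem K, by ring⟩
      algebraMap_mem' := fun r => ⟨r, 0, r.2, zero_mem K, by simp⟩ } with hT
  have key : (IntermediateField.adjoin K {Real.sqrt a}).toSubalgebra ≤ T := by
    rw [IntermediateField.adjoin_simple_toSubalgebra_of_isAlgebraic
      (isIntegral_sqrt_mem K a ha h0).isAlgebraic]
    exact Algebra.adjoin_le (by
      rintro x (rfl : x = Real.sqrt a)
      exact ⟨0, 1, zero_mem K, one_mem K, by ring⟩)
  exact key hz

lemma sqrtAdjoin_succ (k : ℕ) (p : Fin (k + 1) → ℕ) :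
    sqrtAdjoin (k + 1) p =
      (IntermediateField.adjoin (sqrtAdjoin k (p ∘ Fin.castSucc))
        {Real.sqrt (p (Fin.last k))}).restrictScalars ℚ := by
  rw [sqrtAdjoin, sqrtAdjoin]
  erw [IntermediateField.adjoin_adjoin_left]
  congr 1
  ext x
  constructor
  · rintro ⟨i, rfl⟩
    rcases Fin.eq_castSucc_or_eq_last i with ⟨j, rfl⟩ | rfl
    · exact Or.inl ⟨j, rfl⟩
    · exact Or.inr rfl
  · rintro (⟨i, rfl⟩ | rfl)
    · exact ⟨i.castSucc, rfl⟩
    · exact ⟨Fin.last k, rfl⟩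

/-- Main lemma: the square root of a squarefree number coprime to all the `p i`
is not in `ℚ(√p₁, …, √p_k)`. -/
lemma sqrt_not_mem_sqrtAdjoin : ∀ (k : ℕ) (p : Fin k → ℕ), (∀ i, Nat.Prime (p i)) →
    Function.Injective p → ∀ m : ℕ, Squarefree m → m ≠ 1 →
    (∀ i, Nat.Coprime m (p i)) → Real.sqrt m ∉ sqrtAdjoin k p := by
  intro k
  induction k with
  | zero =>
    intro p _ _ m hm hm1 _ hmem
    rw [sqrtAdjoin, Set.range_eq_empty, IntermediateField.adjoin_empty,
      IntermediateField.mem_bot] at hmem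
    obtain ⟨q, hq⟩ := hmem
    refine irrational_sqrt_natCast_iff.mpr ?_ ⟨q, hq⟩
    rintro ⟨r, rfl⟩
    have hr : IsUnit r := hm r (dvd_refl _)
    rw [Nat.isUnit_iff] at hr
    simp [hr] at hm1
  | succ k ih =>
    intro p hp hinj m hm hm1 hcop hmem
    set p' : Fin k → ℕ := p ∘ Fin.castSucc with hp'
    have hp'p : ∀ i, Nat.Prime (p' i) := fun i => hp _
    have hinj' : Function.Injective p' := hinj.comp (Fin.castSucc_injective k)
    set K := sqrtAdjoin k p' with hK
    set a : ℝ := (p (Fin.last k) : ℝ) with haa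
    have h0 : (0:ℝ) ≤ a := Nat.cast_nonneg _
    have haK : a ∈ K := by exact_mod_cast _root_.natCast_mem K (p (Fin.last k))
    have hsq : Real.sqrt a * Real.sqrt a = a := Real.mul_self_sqrt h0
    have hnm : Real.sqrt a ∉ K := by
      refine ih p' hp'p hinj' (p (Fin.last k)) (hp _).squarefree (hp _).ne_one fun i => ?_
      exact (Nat.coprime_primes (hp _) (hp'p i)).mpr
        (fun h => absurd (hinj h) (Fin.castSucc_lt_last i).ne')
    rw [sqrtAdjoin_succ, IntermediateField.mem_restrictScalars] at hmem
    obtain ⟨x, y, hx, hy, hz⟩ := mem_adjoin_sqrt K a haK h0 _ hmem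
    have hmK : (m : ℝ) ∈ K := _root_.natCast_mem K m
    have hm2 : (m:ℝ) = x^2 + y^2 * a + 2*x*y*Real.sqrt a := by
      have hmm := Real.mul_self_sqrt (show (0:ℝ) ≤ (m:ℕ) from Nat.cast_nonneg m)
      linear_combination (-1 : ℝ) * hmm + (Real.sqrt m + x + y * Real.sqrt a) * hz + y^2 * hsq
    -- `2xy√a ∈ K`
    have hxyK : 2*x*y*Real.sqrt a ∈ K := by
      have : 2*x*y*Real.sqrt a = (m:ℝ) - x^2 - y^2*a := by linarith
      rw [this]
      exact sub_mem (sub_mem hmK (by exact pow_mem hx 2)) (mul_mem (pow_mem hy 2) haK)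
    by_cases hxy : x * y = 0
    · rcases mul_eq_zero.mp hxy with h | h
      · -- x = 0 : √m = y √a, so √(a m) = y a ∈ K
        have hym : Real.sqrt m = y * Real.sqrt a := by rw [hz, h]; ring
        have key : Real.sqrt ((p (Fin.last k) * m : ℕ) : ℝ) ∈ K := by
          push_cast
          rw [Real.sqrt_mul h0, hym]
          have : Real.sqrt a * (y * Real.sqrt a) = y * a := by linear_combination y * hsq
          rw [this]
          exact mul_mem hy haK
        refine ih p' hp'p hinj' _ ?_ ?_ ?_ key
        · exact (Nat.squarefree_mul_iff.mpr ⟨(hcop (Fin.last k)).symm,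
            (hp _).squarefree, hm⟩)
        · intro h
          exact (hp (Fin.last k)).ne_one (Nat.eq_one_of_mul_eq_one_right h)
        · intro i
          exact Nat.Coprime.mul ((Nat.coprime_primes (hp _) (hp'p i)).mpr
            (fun h => absurd (hinj h) (Fin.castSucc_lt_last i).ne')) (hcop _)
      · -- y = 0 : √m ∈ K
        have : Real.sqrt m ∈ K := by rw [hz, h]; simpa using hx
        exact ih p' hp'p hinj' m hm hm1 (fun i => hcop _) this
    · -- xy ≠ 0 : √a ∈ K, contradiction
      apply hnm
      have h2 : (2*x*y : ℝ) ≠ 0 := by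
        intro h; apply hxy; nlinarith
      have : Real.sqrt a = (2*x*y*Real.sqrt a) / (2*x*y) := by rw [eq_div_iff h2]; ring
      rw [this]
      exact div_mem hxyK (mul_mem (mul_mem (by exact_mod_cast _root_.natCast_mem K 2) hx) hy)

instance sqrtAdjoin_finiteDimensional (k : ℕ) (p : Fin k → ℕ) :
    FiniteDimensional ℚ (sqrtAdjoin k p) := by
  haveI : Finite (Set.range fun i : Fin k => Real.sqrt (p i)) :=
    (Set.finite_range _).to_subtype
  exact IntermediateField.finiteDimensional_adjoin
    (fun x hx => by obtain ⟨i, rfl⟩ := hx; exact isIntegral_sqrt_nat (p i))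

lemma minpoly_sqrt_natDegree_two (K : IntermediateField ℚ ℝ) (a : ℝ) (ha : a ∈ K)
    (h0 : 0 ≤ a) (hnm : Real.sqrt a ∉ K) :
    (minpoly K (Real.sqrt a)).natDegree = 2 := by
  have hint := isIntegral_sqrt_mem K a ha h0
  have hq : aeval (Real.sqrt a) (X ^ 2 - C (⟨a, ha⟩ : K)) = 0 := by
    have : (algebraMap K ℝ) ⟨a, ha⟩ = a := rfl
    simp [this, Real.sq_sqrt h0]
  have hdvd := minpoly.dvd K (Real.sqrt a) hq
  have hne : (X ^ 2 - C (⟨a, ha⟩ : K)) ≠ 0 := (monic_X_pow_sub_C _ two_ne_zero).ne_zero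
  have hle : (minpoly K (Real.sqrt a)).natDegree ≤ 2 := by
    have := Polynomial.natDegree_le_of_dvd hdvd hne
    rwa [natDegree_X_pow_sub_C] at this
  have hpos : 0 < (minpoly K (Real.sqrt a)).natDegree := minpoly.natDegree_pos hint
  rcases Nat.lt_or_ge (minpoly K (Real.sqrt a)).natDegree 2 with h | h
  · exfalso
    have h1 : (minpoly K (Real.sqrt a)).natDegree = 1 := by omega
    have hmono := minpoly.monic hint
    have heq := hmono.eq_X_add_C h1
    have := minpoly.aeval K (Real.sqrt a)
    rw [heq] at this
    simp only [map_add, aeval_X, aeval_C] at this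
    apply hnm
    have : Real.sqrt a = -((minpoly K (Real.sqrt a)).coeff 0 : ℝ) := by
      have hcast : (algebraMap K ℝ) ((minpoly K (Real.sqrt a)).coeff 0)
          = ((minpoly K (Real.sqrt a)).coeff 0 : ℝ) := rfl
      rw [hcast] at this
      linarith [this]
    rw [this]
    exact neg_mem ((minpoly K (Real.sqrt a)).coeff 0).2
  · omega

lemma finrank_sqrtAdjoin : ∀ (k : ℕ) (p : Fin k → ℕ), (∀ i, Nat.Prime (p i)) →
    Function.Injective p → Module.finrank ℚ (sqrtAdjoin k p) = 2 ^ k := by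
  intro k
  induction k with
  | zero =>
    intro p _ _
    rw [sqrtAdjoin, Set.range_eq_empty, IntermediateField.adjoin_empty]
    simpa using IntermediateField.finrank_bot (F := ℚ) (E := ℝ)
  | succ k ih =>
    intro p hp hinj
    set p' : Fin k → ℕ := p ∘ Fin.castSucc with hp'
    have hp'p : ∀ i, Nat.Prime (p' i) := fun i => hp _
    have hinj' : Function.Injective p' := hinj.comp (Fin.castSucc_injective k)
    set K := sqrtAdjoin k p' with hK
    set a : ℝ := (p (Fin.last k) : ℝ) with haa
    have h0 : (0:ℝ) ≤ a := Nat.cast_nonneg _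
    have haK : a ∈ K := by exact_mod_cast _root_.natCast_mem K (p (Fin.last k))
    have hnm : Real.sqrt a ∉ K := by
      refine sqrt_not_mem_sqrtAdjoin k p' hp'p hinj' (p (Fin.last k)) (hp _).squarefree
        (hp _).ne_one fun i => ?_
      exact (Nat.coprime_primes (hp _) (hp'p i)).mpr
        (fun h => absurd (hinj h) (Fin.castSucc_lt_last i).ne')
    rw [sqrtAdjoin_succ]
    have htower := Module.finrank_mul_finrank ℚ K
      (IntermediateField.adjoin K {Real.sqrt a})
    have h2 : Module.finrank K (IntermediateField.adjoin K {Real.sqrt a}) = 2 := by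
      rw [IntermediateField.adjoin.finrank (isIntegral_sqrt_mem K a haK h0)]
      exact minpoly_sqrt_natDegree_two K a haK h0 hnm
    have hrestrict : Module.finrank ℚ
        ((IntermediateField.adjoin K {Real.sqrt a}).restrictScalars ℚ)
        = Module.finrank ℚ (IntermediateField.adjoin K {Real.sqrt a}) := rfl
    rw [hrestrict, ← htower, h2, ih p' hp'p hinj']
    ring

noncomputable def sqrtPoly (k : ℕ) (p : Fin k → ℕ) : Polynomial ℚ :=
  ∏ i : Fin k, (X ^ 2 - C (p i : ℚ))

lemma sqrtPoly_ne_zero (k : ℕ) (p : Fin k → ℕ) : sqrtPoly k p ≠ 0 :=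
  (monic_prod_of_monic _ _ fun i _ => monic_X_pow_sub_C _ two_ne_zero).ne_zero

lemma isSplittingField_sqrtAdjoin (k : ℕ) (p : Fin k → ℕ) :
    (sqrtPoly k p).IsSplittingField ℚ (sqrtAdjoin k p) := by
  rw [isSplittingField_iff_intermediateField]
  constructor
  · -- splits
    rw [sqrtPoly, Polynomial.map_prod]
    apply Splits.prod
    intro i _
    set s : sqrtAdjoin k p := ⟨Real.sqrt (p i), mem_sqrtAdjoin k p i⟩ with hs
    have hss : s * s = algebraMap ℚ (sqrtAdjoin k p) ((p i : ℚ)) := by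
      apply Subtype.ext
      show Real.sqrt (p i) * Real.sqrt (p i) = ((p i : ℚ) : ℝ)
      rw [Real.mul_self_sqrt (Nat.cast_nonneg _)]
      push_cast; ring
    have hmap : (X ^ 2 - C ((p i : ℚ))).map (algebraMap ℚ (sqrtAdjoin k p))
        = (X - C s) * (X + C s) := by
      rw [Polynomial.map_sub, Polynomial.map_pow, map_X, map_C]
      have : (X - C s) * (X + C s) = X ^ 2 - C s * C s := by ring
      rw [this, ← C_mul, hss]
    rw [hmap]
    refine Splits.mul (Splits.X_sub_C _) ?_
    have : X + C s = X - C (-s) := by rw [map_neg, sub_neg_eq_add]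
    rw [this]; exact Splits.X_sub_C _
  · -- adjoin of roots = ⊤
    apply IntermediateField.lift_injective
    erw [IntermediateField.lift_adjoin, IntermediateField.lift_top]
    apply le_antisymm
    · exact IntermediateField.adjoin_le_iff.mpr (by
        rintro x ⟨y, _, rfl⟩; exact y.2)
    · rw [sqrtAdjoin]
      apply IntermediateField.adjoin.mono
      rintro x ⟨i, rfl⟩
      refine ⟨⟨Real.sqrt (p i), mem_sqrtAdjoin k p i⟩, ?_, rfl⟩
      rw [Polynomial.mem_rootSet]
      refine ⟨sqrtPoly_ne_zero k p, ?_⟩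
      rw [sqrtPoly, map_prod]
      apply Finset.prod_eq_zero (Finset.mem_univ i)
      have : (algebraMap ℚ (sqrtAdjoin k p)) ((p i : ℚ)) =
          (⟨Real.sqrt (p i), mem_sqrtAdjoin k p i⟩ : sqrtAdjoin k p) ^ 2 := by
        apply Subtype.ext
        show ((p i : ℚ) : ℝ) = Real.sqrt (p i) ^ 2
        rw [Real.sq_sqrt (Nat.cast_nonneg _)]; push_cast; ring
      rw [map_sub, map_pow, aeval_X, aeval_C]
      exact sub_eq_zero_of_eq this.symm

lemma card_aut_sqrtAdjoin (k : ℕ) (p : Fin k → ℕ) (hp : ∀ i, Nat.Prime (p i))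
    (hinj : Function.Injective p) :
    Nat.card (sqrtAdjoin k p ≃ₐ[ℚ] sqrtAdjoin k p) = 2 ^ k := by
  haveI := isSplittingField_sqrtAdjoin k p
  haveI : Normal ℚ (sqrtAdjoin k p) := Normal.of_isSplittingField (sqrtPoly k p)
  haveI : IsGalois ℚ (sqrtAdjoin k p) := ⟨⟩
  rw [IsGalois.card_aut_eq_finrank,
    finrank_sqrtAdjoin k p hp hinj]

section Signs
variable (k : ℕ) (p : Fin k → ℕ)

/-- The distinguished generator `√pᵢ` as an element of the field. -/
noncomputable def sqrtGen (i : Fin k) : sqrtAdjoin k p :=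
  ⟨Real.sqrt (p i), mem_sqrtAdjoin k p i⟩

variable {k p}

lemma sqrtGen_sq (i : Fin k) :
    (sqrtGen k p i) ^ 2 = algebraMap ℚ (sqrtAdjoin k p) ((p i : ℚ)) := by
  apply Subtype.ext
  show Real.sqrt (p i) ^ 2 = ((p i : ℚ) : ℝ)
  rw [Real.sq_sqrt (Nat.cast_nonneg _)]; push_cast; ring

lemma apply_sqrtGen (τ : sqrtAdjoin k p ≃ₐ[ℚ] sqrtAdjoin k p) (i : Fin k) :
    ((τ (sqrtGen k p i) : ℝ)) = Real.sqrt (p i) ∨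
      ((τ (sqrtGen k p i) : ℝ)) = -Real.sqrt (p i) := by
  have h : (τ (sqrtGen k p i)) ^ 2 = algebraMap ℚ (sqrtAdjoin k p) ((p i : ℚ)) := by
    rw [← map_pow, sqrtGen_sq, AlgEquiv.commutes]
  have h2 : ((τ (sqrtGen k p i) : ℝ)) ^ 2 = Real.sqrt (p i) ^ 2 := by
    have := congrArg (fun z : sqrtAdjoin k p => (z : ℝ)) h
    push_cast at this
    rw [this, Real.sq_sqrt (Nat.cast_nonneg _)]
  have := sq_eq_sq_iff_eq_or_eq_neg.mp h2
  exact this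

lemma ext_of_agree {τ σ : sqrtAdjoin k p ≃ₐ[ℚ] sqrtAdjoin k p}
    (h : ∀ i, τ (sqrtGen k p i) = σ (sqrtGen k p i)) : τ = σ := by
  have : τ.toAlgHom = σ.toAlgHom := by
    apply IntermediateField.algHom_ext_of_eq_adjoin ℚ (rfl :
      sqrtAdjoin k p = IntermediateField.adjoin ℚ
        (Set.range fun i : Fin k => Real.sqrt (p i)))
    rintro x ⟨i, rfl⟩
    exact h i
  exact AlgEquiv.ext fun x => AlgHom.congr_fun this x

/-- The sign bit of an automorphism at `i`. -/
noncomputable def sgnBit (τ : sqrtAdjoin k p ≃ₐ[ℚ] sqrtAdjoin k p) (i : Fin k) : Bool :=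
  @decide ((τ (sqrtGen k p i) : ℝ) = Real.sqrt (p i)) (Classical.dec _)

lemma apply_sqrtGen_eq_sgnBit (hp : ∀ i, Nat.Prime (p i))
    (τ : sqrtAdjoin k p ≃ₐ[ℚ] sqrtAdjoin k p) (i : Fin k) :
    (τ (sqrtGen k p i) : ℝ) = (if sgnBit τ i then 1 else -1) * Real.sqrt (p i) := by
  by_cases h : (τ (sqrtGen k p i) : ℝ) = Real.sqrt (p i)
  · simp [sgnBit, h]
  · rcases apply_sqrtGen τ i with h' | h'
    · exact absurd h' h
    · have hb : sgnBit τ i = false := by simp [sgnBit, h]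
      rw [h', hb]; norm_num

lemma sgnBit_injective (hp : ∀ i, Nat.Prime (p i)) :
    Function.Injective (sgnBit (k := k) (p := p)) := by
  intro τ σ h
  apply ext_of_agree
  intro i
  apply Subtype.ext
  rw [show ((τ (sqrtGen k p i) : ℝ)) = _ from apply_sqrtGen_eq_sgnBit hp τ i,
    show ((σ (sqrtGen k p i) : ℝ)) = _ from apply_sqrtGen_eq_sgnBit hp σ i, h]

lemma sgnBit_bijective (hp : ∀ i, Nat.Prime (p i)) (hinj : Function.Injective p) :
    Function.Bijective (sgnBit (k := k) (p := p)) := by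
  rw [Nat.bijective_iff_injective_and_card]
  refine ⟨sgnBit_injective hp, ?_⟩
  rw [card_aut_sqrtAdjoin k p hp hinj, Nat.card_eq_fintype_card, Fintype.card_fun]
  simp

end Signs

/-- The Galois group of `F = ℚ(√p₁, …, √p_k)` over `ℚ`: for every choice of signs
there is exactly one automorphism `τ` of `F` fixing `ℚ` with `τ(√pᵢ) = ±√pᵢ`,
every automorphism is of this form, the group is abelian of order `2^k`, and it is
generated by the automorphisms `τᵢ` with `τᵢ(√p_j) = (−1)^{δ(i,j)} √p_j`. -/
theorem galoisGroup_of_sqrtAdjoin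
    (k : ℕ) (p : Fin k → ℕ) (hp : ∀ i, Nat.Prime (p i))
    (hinj : Function.Injective p) :
    (∀ s : Fin k → ℝ, (∀ i, s i = 1 ∨ s i = -1) →
        ∃! τ : sqrtAdjoin k p ≃ₐ[ℚ] sqrtAdjoin k p,
          ∀ (i : Fin k) (x : sqrtAdjoin k p), (x : ℝ) = Real.sqrt (p i) →
            (τ x : ℝ) = s i * Real.sqrt (p i)) ∧
    (∀ τ : sqrtAdjoin k p ≃ₐ[ℚ] sqrtAdjoin k p,
        ∃ s : Fin k → ℝ, (∀ i, s i = 1 ∨ s i = -1) ∧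
          ∀ (i : Fin k) (x : sqrtAdjoin k p), (x : ℝ) = Real.sqrt (p i) →
            (τ x : ℝ) = s i * Real.sqrt (p i)) ∧
    (∀ τ σ : sqrtAdjoin k p ≃ₐ[ℚ] sqrtAdjoin k p, τ * σ = σ * τ) ∧
    Nat.card (sqrtAdjoin k p ≃ₐ[ℚ] sqrtAdjoin k p) = 2 ^ k ∧
    Subgroup.closure
        {τ : sqrtAdjoin k p ≃ₐ[ℚ] sqrtAdjoin k p |
          ∃ i : Fin k, ∀ (j : Fin k) (x : sqrtAdjoin k p), (x : ℝ) = Real.sqrt (p j) →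
            (τ x : ℝ) = (if i = j then (-1 : ℝ) else 1) * Real.sqrt (p j)} = ⊤ := by
  classical
  -- conversion between the two formats of "τ has signs s"
  have hconv : ∀ (τ : sqrtAdjoin k p ≃ₐ[ℚ] sqrtAdjoin k p) (s : Fin k → ℝ),
      (∀ i, ((τ (sqrtGen k p i)) : ℝ) = s i * Real.sqrt (p i)) →
      ∀ (i : Fin k) (x : sqrtAdjoin k p), (x : ℝ) = Real.sqrt (p i) →
        (τ x : ℝ) = s i * Real.sqrt (p i) := by
    intro τ s h i x hx
    have : x = sqrtGen k p i := Subtype.ext hx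
    rw [this]; exact h i
  have huniq : ∀ τ σ : sqrtAdjoin k p ≃ₐ[ℚ] sqrtAdjoin k p,
      (∀ i, ((τ (sqrtGen k p i)) : ℝ) = ((σ (sqrtGen k p i)) : ℝ)) → τ = σ :=
    fun τ σ h => ext_of_agree fun i => Subtype.ext (h i)
  have hexist : ∀ s : Fin k → ℝ, (∀ i, s i = 1 ∨ s i = -1) →
      ∃ τ : sqrtAdjoin k p ≃ₐ[ℚ] sqrtAdjoin k p,
        ∀ i, ((τ (sqrtGen k p i)) : ℝ) = s i * Real.sqrt (p i) := by
    intro s hs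
    obtain ⟨τ, hτ⟩ := (sgnBit_bijective hp hinj).2 (fun i => decide (s i = 1))
    refine ⟨τ, fun i => ?_⟩
    rw [apply_sqrtGen_eq_sgnBit hp τ i, hτ]
    rcases hs i with h | h
    · simp [h]
    · have : ¬ (s i = 1) := by rw [h]; norm_num
      simp only [this, h, decide_eq_true_eq, if_neg, decide_false]
      norm_num
  refine ⟨?_, ?_, ?_, card_aut_sqrtAdjoin k p hp hinj, ?_⟩
  · -- existence and uniqueness
    intro s hs
    obtain ⟨τ, hτ⟩ := hexist s hs
    refine ⟨τ, hconv τ s hτ, ?_⟩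
    intro τ' hτ'
    exact huniq τ' τ fun i => by rw [hτ' i (sqrtGen k p i) rfl, hτ i]
  · -- every automorphism has this form
    intro τ
    refine ⟨fun i => if sgnBit τ i then 1 else -1, fun i => by by_cases h : sgnBit τ i <;>
      simp [h], hconv τ _ fun i => apply_sqrtGen_eq_sgnBit hp τ i⟩
  · -- abelian
    intro τ σ
    apply huniq
    intro i
    show (((τ * σ) (sqrtGen k p i) : ℝ)) = (((σ * τ) (sqrtGen k p i) : ℝ))
    have key : ∀ ρ₁ ρ₂ : sqrtAdjoin k p ≃ₐ[ℚ] sqrtAdjoin k p,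
        (((ρ₁ * ρ₂) (sqrtGen k p i) : ℝ)) =
          (if sgnBit ρ₁ i then 1 else -1) * (if sgnBit ρ₂ i then 1 else -1)
            * Real.sqrt (p i) := by
      intro ρ₁ ρ₂
      show ((ρ₁ (ρ₂ (sqrtGen k p i)) : ℝ)) = _
      by_cases h : sgnBit ρ₂ i
      · have : ρ₂ (sqrtGen k p i) = sqrtGen k p i := by
          apply Subtype.ext
          rw [apply_sqrtGen_eq_sgnBit hp ρ₂ i, h]
          show (1 : ℝ) * Real.sqrt (p i) = Real.sqrt (p i); ring
        rw [this, apply_sqrtGen_eq_sgnBit hp ρ₁ i, h]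
        norm_num
      · have : ρ₂ (sqrtGen k p i) = -sqrtGen k p i := by
          apply Subtype.ext
          rw [apply_sqrtGen_eq_sgnBit hp ρ₂ i]
          simp only [h]
          show (-1 : ℝ) * Real.sqrt (p i) = -(Real.sqrt (p i)); ring
        rw [this, map_neg]
        have hneg : ((-(ρ₁ (sqrtGen k p i)) : sqrtAdjoin k p) : ℝ)
            = -((ρ₁ (sqrtGen k p i) : ℝ)) := rfl
        rw [hneg, apply_sqrtGen_eq_sgnBit hp ρ₁ i]
        simp only [h]
        norm_num
    rw [key τ σ, key σ τ]
    ring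
  · -- generation
    set S := {τ : sqrtAdjoin k p ≃ₐ[ℚ] sqrtAdjoin k p |
          ∃ i : Fin k, ∀ (j : Fin k) (x : sqrtAdjoin k p), (x : ℝ) = Real.sqrt (p j) →
            (τ x : ℝ) = (if i = j then (-1 : ℝ) else 1) * Real.sqrt (p j)} with hS
    have key : ∀ T : Finset (Fin k), ∀ τ : sqrtAdjoin k p ≃ₐ[ℚ] sqrtAdjoin k p,
        (∀ i, ((τ (sqrtGen k p i)) : ℝ) =
          (if i ∈ T then (-1:ℝ) else 1) * Real.sqrt (p i)) →
        τ ∈ Subgroup.closure S := by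
      intro T
      induction T using Finset.induction_on with
      | empty =>
        intro τ hτ
        have : τ = 1 := by
          apply huniq
          intro i
          rw [hτ i]
          show _ = ((sqrtGen k p i : ℝ))
          simp [sqrtGen]
        rw [this]; exact one_mem _
      | @insert j T hj ih =>
        intro τ hτ
        obtain ⟨τj, hτj⟩ := hexist (fun i => if j = i then -1 else 1)
          (fun i => by by_cases h : j = i <;> simp [h])
        have hτjS : τj ∈ S := ⟨j, hconv τj _ hτj⟩
        have hmul : ∀ i, (((τj * τ) (sqrtGen k p i)) : ℝ) =
            (if i ∈ T then (-1:ℝ) else 1) * Real.sqrt (p i) := by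
          intro i
          show ((τj (τ (sqrtGen k p i)) : ℝ)) = _
          by_cases hin : i ∈ insert j T
          · have : τ (sqrtGen k p i) = -sqrtGen k p i := by
              apply Subtype.ext
              rw [hτ i, if_pos hin]
              show (-1 : ℝ) * Real.sqrt (p i) = -(Real.sqrt (p i)); ring
            rw [this, map_neg]
            have hneg : ((-(τj (sqrtGen k p i)) : sqrtAdjoin k p) : ℝ)
                = -((τj (sqrtGen k p i) : ℝ)) := rfl
            rw [hneg, hτj i]
            rcases Finset.mem_insert.mp hin with h | h
            · rw [if_pos h.symm, if_neg (h ▸ hj)]; ring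
            · have hij : j ≠ i := fun he => hj (he ▸ h)
              rw [if_neg hij, if_pos h]; ring
          · have hiT : i ∉ T := fun h => hin (Finset.mem_insert_of_mem h)
            have hij : j ≠ i := fun he => hin (he ▸ Finset.mem_insert_self j T)
            have : τ (sqrtGen k p i) = sqrtGen k p i := by
              apply Subtype.ext
              rw [hτ i, if_neg hin]
              show (1 : ℝ) * Real.sqrt (p i) = Real.sqrt (p i); ring
            rw [this, hτj i, if_neg hij, if_neg hiT]
        have hmem := ih (τj * τ) hmul
        have : τ = τj⁻¹ * (τj * τ) := by group
        rw [this]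
        exact mul_mem (inv_mem (Subgroup.subset_closure hτjS)) hmem
    rw [eq_top_iff]
    intro τ _
    apply key (Finset.univ.filter (fun i => sgnBit τ i = false)) τ
    intro i
    rw [apply_sqrtGen_eq_sgnBit hp τ i]
    by_cases h : sgnBit τ i <;> simp [h]
end

section
/- Let p₁, …, p_k be distinct prime numbers and let 𝔞 ⊆ ℝ be the ring of all integral linear combinations of the numbers ∏_{i∈I} √p_i, I ⊆ {1, …, k}. Let d ≥ 1 and let M be a d×d real matrix all of whose entries lie in 𝔞 and such that every entry of M − I lies in 2𝔞, where I is the identity matrix. Then M is invertible; in fact det M = 1 + 2α for some α ∈ 𝔞, and 1 + 2α ≠ 0. -/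
/-- The ring `𝔞` of all integral linear combinations of the products
`∏_{i ∈ I} √pᵢ`, `I ⊆ {1, …, k}` (the empty product being `1`). -/
def intSqrtCombos (k : ℕ) (p : Fin k → ℕ) : Set ℝ :=
  {x | ∃ c : Finset (Fin k) → ℤ,
    x = ∑ I : Finset (Fin k), (c I : ℝ) * ∏ i ∈ I, Real.sqrt (p i)}

namespace ISC
variable {k : ℕ} {p : Fin k → ℕ}

noncomputable def b (p : Fin k → ℕ) (I : Finset (Fin k)) : ℝ := ∏ i ∈ I, Real.sqrt (p i)

lemma single_mem (m : ℤ) (K : Finset (Fin k)) : (m : ℝ) * b p K ∈ intSqrtCombos k p := by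
  refine ⟨fun J => if J = K then m else 0, ?_⟩
  rw [Finset.sum_eq_single K] <;> simp +contextual [b]

lemma zero_mem : (0:ℝ) ∈ intSqrtCombos k p := ⟨0, by simp⟩

lemma add_mem {x y : ℝ} (hx : x ∈ intSqrtCombos k p) (hy : y ∈ intSqrtCombos k p) :
    x + y ∈ intSqrtCombos k p := by
  obtain ⟨c, rfl⟩ := hx; obtain ⟨c', rfl⟩ := hy
  exact ⟨c + c', by simp [add_mul, Finset.sum_add_distrib]⟩

lemma neg_mem {x : ℝ} (hx : x ∈ intSqrtCombos k p) : -x ∈ intSqrtCombos k p := by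
  obtain ⟨c, rfl⟩ := hx
  exact ⟨-c, by simp [Finset.sum_neg_distrib]⟩

lemma sum_mem {ι : Type*} (s : Finset ι) (f : ι → ℝ) (h : ∀ i ∈ s, f i ∈ intSqrtCombos k p) :
    ∑ i ∈ s, f i ∈ intSqrtCombos k p :=
  Finset.sum_induction f (· ∈ intSqrtCombos k p) (fun _ _ => add_mem) zero_mem h

lemma b_mul (I J : Finset (Fin k)) :
    b p I * b p J = ((∏ i ∈ I ∩ J, (p i : ℤ)) : ℝ) * b p ((I \ J) ∪ (J \ I)) := by
  unfold b
  have h1 : ∏ i ∈ I, Real.sqrt (p i)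
      = (∏ i ∈ I \ J, Real.sqrt (p i)) * ∏ i ∈ I ∩ J, Real.sqrt (p i) := by
    conv_lhs => rw [← Finset.sdiff_union_inter I J]
    exact Finset.prod_union (Finset.sdiff_disjoint.mono_right Finset.inter_subset_right)
  have h2 : ∏ i ∈ J, Real.sqrt (p i)
      = (∏ i ∈ J \ I, Real.sqrt (p i)) * ∏ i ∈ I ∩ J, Real.sqrt (p i) := by
    conv_lhs => rw [← Finset.sdiff_union_inter J I]
    rw [Finset.prod_union (Finset.sdiff_disjoint.mono_right Finset.inter_subset_right),
      Finset.inter_comm]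
  have hsq : (∏ i ∈ I ∩ J, Real.sqrt (p i)) * ∏ i ∈ I ∩ J, Real.sqrt (p i)
      = ∏ i ∈ I ∩ J, (p i : ℝ) := by
    rw [← Finset.prod_mul_distrib]
    exact Finset.prod_congr rfl fun i _ => Real.mul_self_sqrt (Nat.cast_nonneg _)
  rw [h1, h2, Finset.prod_union disjoint_sdiff_sdiff]
  push_cast
  rw [← hsq]
  ring

lemma mul_mem {x y : ℝ} (hx : x ∈ intSqrtCombos k p) (hy : y ∈ intSqrtCombos k p) :
    x * y ∈ intSqrtCombos k p := by
  obtain ⟨c, rfl⟩ := hx; obtain ⟨c', rfl⟩ := hy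
  rw [Finset.sum_mul_sum]
  refine sum_mem _ _ fun I _ => sum_mem _ _ fun J _ => ?_
  have : ((c I : ℝ) * b p I) * ((c' J : ℝ) * b p J)
      = ((c I * c' J * ∏ i ∈ I ∩ J, (p i : ℤ) : ℤ) : ℝ) * b p ((I \ J) ∪ (J \ I)) := by
    push_cast
    rw [mul_mul_mul_comm, b_mul]
    push_cast
    ring
  show ((c I : ℝ) * b p I) * ((c' J : ℝ) * b p J) ∈ _
  rw [this]
  exact single_mem _ _

lemma one_mem : (1:ℝ) ∈ intSqrtCombos k p := by
  have := single_mem (k := k) (p := p) 1 ∅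
  simpa [b] using this


lemma isIntegral_sqrt (n : ℕ) : IsIntegral ℤ (Real.sqrt n) := by
  refine ⟨Polynomial.X ^ 2 - Polynomial.C (n : ℤ), Polynomial.monic_X_pow_sub_C _ (by norm_num), ?_⟩
  simp [Polynomial.eval₂, Real.sq_sqrt (Nat.cast_nonneg n)]

lemma isIntegral {x : ℝ} (hx : x ∈ intSqrtCombos k p) : IsIntegral ℤ x := by
  obtain ⟨c, rfl⟩ := hx
  have : ∀ I : Finset (Fin k), ((c I : ℝ) * ∏ i ∈ I, Real.sqrt (p i))
      ∈ integralClosure ℤ ℝ := by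
    intro I
    refine Subalgebra.mul_mem _ ?_ (Subalgebra.prod_mem _ fun i _ => isIntegral_sqrt (p i))
    exact Subalgebra.intCast_mem _ _
  exact Subalgebra.sum_mem _ fun I _ => this I

lemma not_integral_neg_half : ¬ IsIntegral ℤ ((-1 : ℝ)/2) := by
  intro h
  have : IsIntegral ℤ ((-1 : ℚ)/2) := by
    rw [show ((-1:ℝ)/2) = algebraMap ℚ ℝ ((-1:ℚ)/2) by norm_num] at h
    exact (isIntegral_algebraMap_iff (algebraMap ℚ ℝ).injective).mp h
  obtain ⟨y, hy⟩ := IsIntegrallyClosed.isIntegral_iff.mp this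
  have : (y : ℚ) = -1/2 := by exact_mod_cast hy
  have h2 : (2 * y : ℤ) = -1 := by exact_mod_cast (by linarith : 2*(y:ℚ) = -1)
  omega

end ISC

/-- If `M` is a `d×d` real matrix with entries in `𝔞` such that all entries of
`M − I` lie in `2𝔞`, then `det M = 1 + 2α` with `α ∈ 𝔞`, `1 + 2α ≠ 0`,
and `M` is invertible. -/
theorem matrix_entries_int_sqrt_combos_invertible
    (k : ℕ) (p : Fin k → ℕ) (hp : ∀ i, Nat.Prime (p i))
    (hinj : Function.Injective p)
    (d : ℕ) (hd : 1 ≤ d) (M : Matrix (Fin d) (Fin d) ℝ)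
    (hM : ∀ a b, M a b ∈ intSqrtCombos k p)
    (hMI : ∀ a b, ∃ α ∈ intSqrtCombos k p, (M - 1) a b = 2 * α) :
    (∃ α ∈ intSqrtCombos k p, M.det = 1 + 2 * α ∧ (1 : ℝ) + 2 * α ≠ 0) ∧
    IsUnit M := by
  -- the subring structure
  let A : Subring ℝ :=
    { carrier := intSqrtCombos k p
      zero_mem' := ISC.zero_mem
      one_mem' := ISC.one_mem
      add_mem' := ISC.add_mem
      neg_mem' := ISC.neg_mem
      mul_mem' := ISC.mul_mem }
  have hint : ∀ x : A, IsIntegral ℤ (x : ℝ) := fun x => ISC.isIntegral x.2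
  -- lift M to a matrix over A
  set M' : Matrix (Fin d) (Fin d) A := fun a b => ⟨M a b, hM a b⟩ with hM'
  have hsub : M'.map (A.subtype) = M := by
    ext a b; rfl
  -- work modulo the ideal (2) in A
  let J : Ideal A := Ideal.span {(2 : A)}
  let π : A →+* A ⧸ J := Ideal.Quotient.mk J
  have hone : M'.map π = 1 := by
    ext a b
    obtain ⟨α, hα, hαeq⟩ := hMI a b
    have hmem : M' a b - (1 : Matrix (Fin d) (Fin d) A) a b ∈ J := by
      refine Ideal.mem_span_singleton.mpr ⟨⟨α, hα⟩, ?_⟩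
      have : ((M' a b - (1 : Matrix (Fin d) (Fin d) A) a b : A) : ℝ) = 2 * α := by
        have h1 : ((1 : Matrix (Fin d) (Fin d) A) a b : ℝ)
            = (1 : Matrix (Fin d) (Fin d) ℝ) a b := by
          by_cases h : a = b <;> simp [Matrix.one_apply, h]
        push_cast [h1]
        simpa [Matrix.sub_apply] using hαeq
      exact Subtype.ext (by rw [this]; push_cast; norm_cast)
    have := (Ideal.Quotient.eq (I := J)).mpr hmem
    simpa [Matrix.map_apply, Matrix.one_apply, π, apply_ite π] using this
  have hdet : π M'.det = 1 := by
    rw [RingHom.map_det, RingHom.mapMatrix_apply, hone, Matrix.det_one]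
  have hmem : M'.det - 1 ∈ J := by
    rw [← Ideal.Quotient.eq (I := J)] at *
    simpa [π] using hdet
  obtain ⟨β, hβ⟩ := Ideal.mem_span_singleton.mp hmem
  have hdetR : M.det = 1 + 2 * (β : ℝ) := by
    have : A.subtype M'.det = M.det := by
      rw [← hsub, ← RingHom.mapMatrix_apply, ← RingHom.map_det]
    have h2 : M'.det = 1 + 2 * β := by linear_combination hβ
    rw [← this, h2]
    push_cast
    norm_cast
  have hne : (1 : ℝ) + 2 * (β : ℝ) ≠ 0 := by
    intro h0
    have hβi : IsIntegral ℤ ((β : ℝ)) := hint β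
    have : (β : ℝ) = (-1)/2 := by linarith
    rw [this] at hβi
    exact ISC.not_integral_neg_half hβi
  refine ⟨⟨β, β.2, hdetR, hne⟩, ?_⟩
  rw [Matrix.isUnit_iff_isUnit_det, isUnit_iff_ne_zero, hdetR]
  exact hne
end

section
/- Let D ≥ 1 and let m₁, m₂, m₃ ∈ ℤ₁^D, and set m = m₁ + m₂ + m₃. Then: (i) the integer ⟨m₁, m₂ + m₃⟩ + ⟨m₂, m₃⟩ is odd, and consequently |m₁|² + |m₂|² + |m₃|² ≠ |m|²; (ii) |m₁|² − |m₂|² − |m₃|² ≠ |m|²; (iii) |m₁|² + |m₂|² − |m₃|² = |m|² if and only if ⟨m₁ + m₃, m₂ + m₃⟩ = 0. In particular, the condition ±|m₁|² ± |m₂|² ± |m₃|² = ±|m|², with the sign pattern in which the terms for m₁, m₂ carry the same sign and the term for m₃ the opposite sign of the right-hand side excluded from cases (i)–(ii), is equivalent to ⟨m₁ + m₃, m₂ + m₃⟩ = 0. -/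
/-- The standard inner product `⟨u, v⟩ = u₁v₁ + ⋯ + u_D v_D` on `ℤ^D`. -/
def dotZ (D : ℕ) (u v : Fin D → ℤ) : ℤ := ∑ i, u i * v i

/-- Membership in the affine lattice `ℤ₁^D = (1,0,…,0) + 2ℤ^D`: the first
component is odd and all the other components are even. -/
def memZ1 (D : ℕ) (hD : 0 < D) (m : Fin D → ℤ) : Prop :=
  Odd (m ⟨0, hD⟩) ∧ ∀ i : Fin D, i ≠ ⟨0, hD⟩ → Even (m i)

lemma dotZ_add_left (D : ℕ) (a b v : Fin D → ℤ) :
    dotZ D (a + b) v = dotZ D a v + dotZ D b v := by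
  simp [dotZ, add_mul, Finset.sum_add_distrib]

lemma dotZ_add_right (D : ℕ) (u a b : Fin D → ℤ) :
    dotZ D u (a + b) = dotZ D u a + dotZ D u b := by
  simp [dotZ, mul_add, Finset.sum_add_distrib]

lemma dotZ_comm (D : ℕ) (u v : Fin D → ℤ) : dotZ D u v = dotZ D v u := by
  simp [dotZ, mul_comm]

lemma dotZ_odd (D : ℕ) (hD : 0 < D) (u v : Fin D → ℤ)
    (hu : memZ1 D hD u) (hv : memZ1 D hD v) : Odd (dotZ D u v) := by
  have h0 : (⟨0, hD⟩ : Fin D) ∈ Finset.univ := Finset.mem_univ _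
  rw [dotZ, ← Finset.add_sum_erase _ _ h0]
  have h1 : Odd (u ⟨0, hD⟩ * v ⟨0, hD⟩) := hu.1.mul hv.1
  have h2 : Even (∑ i ∈ Finset.univ.erase ⟨0, hD⟩, u i * v i) := by
    apply Finset.even_sum
    intro i hi
    exact ((hu.2 i (Finset.ne_of_mem_erase hi)).mul_right _)
  exact h1.add_even h2

/-- For `m₁, m₂, m₃ ∈ ℤ₁^D` and `m = m₁ + m₂ + m₃`:
(i) `⟨m₁, m₂+m₃⟩ + ⟨m₂, m₃⟩` is odd, hence `|m₁|² + |m₂|² + |m₃|² ≠ |m|²`;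
(ii) `|m₁|² − |m₂|² − |m₃|² ≠ |m|²`;
(iii) `|m₁|² + |m₂|² − |m₃|² = |m|²` iff `⟨m₁+m₃, m₂+m₃⟩ = 0`. -/
theorem z1_lattice_resonance_conditions
    (D : ℕ) (hD : 0 < D) (m₁ m₂ m₃ : Fin D → ℤ)
    (h₁ : memZ1 D hD m₁) (h₂ : memZ1 D hD m₂) (h₃ : memZ1 D hD m₃) :
    (Odd (dotZ D m₁ (m₂ + m₃) + dotZ D m₂ m₃) ∧
      dotZ D m₁ m₁ + dotZ D m₂ m₂ + dotZ D m₃ m₃ ≠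
        dotZ D (m₁ + m₂ + m₃) (m₁ + m₂ + m₃)) ∧
    (dotZ D m₁ m₁ - dotZ D m₂ m₂ - dotZ D m₃ m₃ ≠
      dotZ D (m₁ + m₂ + m₃) (m₁ + m₂ + m₃)) ∧
    (dotZ D m₁ m₁ + dotZ D m₂ m₂ - dotZ D m₃ m₃ =
        dotZ D (m₁ + m₂ + m₃) (m₁ + m₂ + m₃) ↔
      dotZ D (m₁ + m₃) (m₂ + m₃) = 0) := by
  have o12 := dotZ_odd D hD m₁ m₂ h₁ h₂
  have o13 := dotZ_odd D hD m₁ m₃ h₁ h₃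
  have o23 := dotZ_odd D hD m₂ m₃ h₂ h₃
  have o22 := dotZ_odd D hD m₂ m₂ h₂ h₂
  have o33 := dotZ_odd D hD m₃ m₃ h₃ h₃
  have hexp : dotZ D (m₁ + m₂ + m₃) (m₁ + m₂ + m₃) =
      dotZ D m₁ m₁ + dotZ D m₂ m₂ + dotZ D m₃ m₃ +
      2 * (dotZ D m₁ m₂ + dotZ D m₁ m₃ + dotZ D m₂ m₃) := by
    simp only [dotZ_add_left, dotZ_add_right]
    rw [dotZ_comm D m₂ m₁, dotZ_comm D m₃ m₁, dotZ_comm D m₃ m₂]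
    ring
  have hcross : dotZ D m₁ (m₂ + m₃) + dotZ D m₂ m₃ =
      dotZ D m₁ m₂ + dotZ D m₁ m₃ + dotZ D m₂ m₃ := by
    rw [dotZ_add_right]
  have oddsum : Odd (dotZ D m₁ m₂ + dotZ D m₁ m₃ + dotZ D m₂ m₃) :=
    (o12.add_odd o13).add_odd o23
  refine ⟨⟨hcross ▸ oddsum, ?_⟩, ?_, ?_⟩
  · intro h
    rw [hexp] at h
    obtain ⟨k, hk⟩ := oddsum
    rw [hk] at h
    have h2 : (2:ℤ) * (2 * k + 1) = 0 := by linarith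
    omega
  · intro h
    rw [hexp] at h
    have heq : dotZ D m₂ m₂ + dotZ D m₃ m₃ +
        (dotZ D m₁ m₂ + dotZ D m₁ m₃ + dotZ D m₂ m₃) = 0 := by linarith
    obtain ⟨k, hk⟩ := (o22.add_odd o33).add_odd oddsum
    rw [hk] at heq
    omega
  · have hexp2 : dotZ D (m₁ + m₃) (m₂ + m₃) =
        dotZ D m₁ m₂ + dotZ D m₁ m₃ + dotZ D m₂ m₃ + dotZ D m₃ m₃ := by
      simp only [dotZ_add_left, dotZ_add_right]
      rw [dotZ_comm D m₃ m₂]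
      ring
    rw [hexp, hexp2]
    constructor <;> intro h <;> linarith
end

section
/- Let A and B be two d×d self-adjoint complex matrices, and for a self-adjoint matrix X let λ⁽¹⁾(X) ≤ λ⁽²⁾(X) ≤ ⋯ ≤ λ⁽ᵈ⁾(X) denote its eigenvalues listed in nondecreasing order with multiplicity. Then for every a = 1, …, d one has |λ⁽ᵃ⁾(A + B) − λ⁽ᵃ⁾(A)| ≤ Σ_{b=1}^{d} |λ⁽ᵇ⁾(B)|. -/
open Polynomial Matrix Module Submodule
open scoped InnerProductSpace

lemma my_charpoly_conj {d : ℕ} (U : Matrix.unitaryGroup (Fin d) ℂ)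
    (D : Matrix (Fin d) (Fin d) ℂ) :
    ((U : Matrix (Fin d) (Fin d) ℂ) * D * star (U : Matrix (Fin d) (Fin d) ℂ)).charpoly
      = D.charpoly := by
  have h1 : (U : Matrix (Fin d) (Fin d) ℂ) * star (U : Matrix (Fin d) (Fin d) ℂ) = 1 :=
    Matrix.mem_unitaryGroup_iff.mp U.2
  set Uc := (C : ℂ →+* ℂ[X]).mapMatrix (U : Matrix (Fin d) (Fin d) ℂ) with hUc
  set Usc := (C : ℂ →+* ℂ[X]).mapMatrix (star (U : Matrix (Fin d) (Fin d) ℂ)) with hUsc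
  have h2 : Uc * Usc = 1 := by
    rw [hUc, hUsc, ← RingHom.map_mul, h1, RingHom.map_one]
  have key : charmatrix ((U : Matrix (Fin d) (Fin d) ℂ) * D * star (U : Matrix (Fin d) (Fin d) ℂ))
      = Uc * charmatrix D * Usc := by
    rw [charmatrix, charmatrix, Matrix.mul_sub, Matrix.sub_mul, RingHom.map_mul, RingHom.map_mul]
    congr 1
    · rw [scalar_apply, ← Matrix.smul_one_eq_diagonal, Matrix.mul_smul, Matrix.mul_one, Matrix.smul_mul, h2]
  rw [Matrix.charpoly, key, det_mul, det_mul, Matrix.charpoly]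
  have h3 : Uc.det * Usc.det = 1 := by
    rw [← det_mul, h2, det_one]
  calc Uc.det * (charmatrix D).det * Usc.det
      = Uc.det * Usc.det * (charmatrix D).det := by ring
    _ = (charmatrix D).det := by rw [h3, one_mul]

lemma my_charpoly_diagonal {d : ℕ} (v : Fin d → ℂ) :
    (Matrix.diagonal v).charpoly = ∏ i : Fin d, (X - C (v i)) := by
  have h : charmatrix (Matrix.diagonal v) = Matrix.diagonal (fun i => X - C (v i)) := by
    ext i j
    by_cases hij : i = j
    · subst hij; simp [charmatrix_apply_eq]
    · simp [charmatrix_apply_ne _ _ _ hij, Matrix.diagonal_apply_ne _ hij,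
        Matrix.diagonal_apply_ne' _ (Ne.symm hij)]
  rw [Matrix.charpoly, h, Matrix.det_diagonal]

lemma my_charpoly_hermitian {d : ℕ} {M : Matrix (Fin d) (Fin d) ℂ} (hM : M.IsHermitian) :
    M.charpoly = ∏ i : Fin d, (X - C ((hM.eigenvalues i : ℝ) : ℂ)) := by
  conv_lhs => rw [hM.spectral_theorem]
  simp only [Unitary.conjStarAlgAut_apply, Unitary.coe_star]
  rw [my_charpoly_conj hM.eigenvectorUnitary (Matrix.diagonal (RCLike.ofReal ∘ hM.eigenvalues)),
    my_charpoly_diagonal]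
  rfl

lemma my_monotone_eq_sort {d : ℕ} (μ ν : Fin d → ℝ) (hμ : Monotone μ)
    (h : ∏ i : Fin d, (X - C ((μ i : ℝ) : ℂ)) = ∏ i : Fin d, (X - C ((ν i : ℝ) : ℂ))) :
    μ = ν ∘ Tuple.sort ν := by
  have hroots : (Finset.univ.val.map (fun i => ((μ i : ℝ) : ℂ)))
      = (Finset.univ.val.map (fun i => ((ν i : ℝ) : ℂ))) := by
    have h1 := congrArg Polynomial.roots h
    have e : ∀ (f : Fin d → ℝ), (∏ i : Fin d, (X - C ((f i : ℝ) : ℂ)))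
        = ((Finset.univ.val.map (fun i => ((f i : ℝ) : ℂ))).map (fun a : ℂ => X - C a)).prod := by
      intro f
      rw [Multiset.map_map, Finset.prod_eq_multiset_prod]
      rfl
    rwa [e μ, e ν, Polynomial.roots_multiset_prod_X_sub_C,
      Polynomial.roots_multiset_prod_X_sub_C] at h1
  have hre : Finset.univ.val.map μ = Finset.univ.val.map ν := by
    apply Multiset.map_injective (f := fun r : ℝ => (r : ℂ)) Complex.ofReal_injective
    rwa [Multiset.map_map, Multiset.map_map]
  have hperm : List.Perm (List.ofFn μ) (List.ofFn ν) := by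
    rw [Fin.univ_val_map, Fin.univ_val_map] at hre
    exact Multiset.coe_eq_coe.mp hre
  have hperm2 : List.Perm (List.ofFn μ) (List.ofFn (ν ∘ Tuple.sort ν)) :=
    hperm.trans (Equiv.Perm.ofFn_comp_perm (Tuple.sort ν) ν).symm
  have heq : List.ofFn μ = List.ofFn (ν ∘ Tuple.sort ν) :=
    List.Perm.eq_of_sortedLE (List.sortedLE_ofFn_iff.mpr hμ)
      (List.sortedLE_ofFn_iff.mpr (Tuple.monotone_sort ν)) hperm2
  exact List.ofFn_injective heq

variable {d : ℕ} {M : Matrix (Fin d) (Fin d) ℂ}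

lemma my_toEuclideanLin_eigen (hM : M.IsHermitian) (i : Fin d) :
    Matrix.toEuclideanLin M (hM.eigenvectorBasis i)
      = ((hM.eigenvalues i : ℝ) : ℂ) • hM.eigenvectorBasis i := by
  apply PiLp.ext
  intro j
  have h := congrFun (hM.mulVec_eigenvectorBasis i) j
  simp only [Matrix.toEuclideanLin_apply, Pi.smul_apply, smul_eq_mul] at *
  simpa [Complex.real_smul] using h

lemma my_quad_eq (hM : M.IsHermitian) (x : EuclideanSpace ℂ (Fin d)) :
    Complex.re ⟪x, Matrix.toEuclideanLin M x⟫_ℂ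
      = ∑ i, hM.eigenvalues i * ‖⟪hM.eigenvectorBasis i, x⟫_ℂ‖ ^ 2 := by
  set b := hM.eigenvectorBasis
  have hsymm := (Matrix.isHermitian_iff_isSymmetric.mp hM)
  have key : ⟪x, Matrix.toEuclideanLin M x⟫_ℂ
      = ∑ i, (((hM.eigenvalues i * ‖⟪b i, x⟫_ℂ‖ ^ 2 : ℝ)) : ℂ) := by
    rw [← b.sum_inner_mul_inner x (Matrix.toEuclideanLin M x)]
    refine Finset.sum_congr rfl fun i _ => ?_
    have h1 : ⟪b i, Matrix.toEuclideanLin M x⟫_ℂ = ⟪Matrix.toEuclideanLin M (b i), x⟫_ℂ :=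
      (hsymm (b i) x).symm
    rw [h1, my_toEuclideanLin_eigen hM i, inner_smul_left]
    have h2 : ⟪x, b i⟫_ℂ = (starRingEnd ℂ) ⟪b i, x⟫_ℂ := (inner_conj_symm _ _).symm
    rw [h2]
    have h3 : (starRingEnd ℂ) ⟪b i, x⟫_ℂ * ⟪b i, x⟫_ℂ = ((‖⟪b i, x⟫_ℂ‖ : ℂ)) ^ 2 :=
      RCLike.conj_mul _
    rw [Complex.conj_ofReal, mul_left_comm, h3]
    push_cast
    ring
  rw [key, Complex.re_sum]
  simp only [Complex.ofReal_re]

lemma my_parseval (b : OrthonormalBasis (Fin d) ℂ (EuclideanSpace ℂ (Fin d)))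
    (x : EuclideanSpace ℂ (Fin d)) :
    ‖x‖ ^ 2 = ∑ i, ‖⟪b i, x⟫_ℂ‖ ^ 2 := by
  have key : ⟪x, x⟫_ℂ = ∑ i, ((‖⟪b i, x⟫_ℂ‖ ^ 2 : ℝ) : ℂ) := by
    rw [← b.sum_inner_mul_inner x x]
    refine Finset.sum_congr rfl fun i _ => ?_
    rw [← inner_conj_symm x (b i)]
    have h3 : (starRingEnd ℂ) ⟪b i, x⟫_ℂ * ⟪b i, x⟫_ℂ = ((‖⟪b i, x⟫_ℂ‖ : ℂ)) ^ 2 :=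
      RCLike.conj_mul _
    rw [h3]
    push_cast
    ring
  have h := congrArg Complex.re key
  rw [Complex.re_sum] at h
  simp only [Complex.ofReal_re] at h
  rw [← h]; exact (inner_self_eq_norm_sq (𝕜 := ℂ) x).symm

lemma my_inner_eq_zero (b : OrthonormalBasis (Fin d) ℂ (EuclideanSpace ℂ (Fin d)))
    (s : Finset (Fin d)) (x : EuclideanSpace ℂ (Fin d))
    (hx : x ∈ Submodule.span ℂ (b '' ↑s)) {j : Fin d} (hj : j ∉ s) :
    ⟪b j, x⟫_ℂ = 0 := by
  induction hx using Submodule.span_induction with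
  | mem y hy =>
    obtain ⟨i, hi, rfl⟩ := hy
    exact b.orthonormal.2 (fun h : j = i => hj (h ▸ hi))
  | zero => exact inner_zero_right _
  | add y z hy hz hy' hz' => rw [inner_add_right, hy', hz', add_zero]
  | smul c y hy hy' => rw [inner_smul_right, hy', mul_zero]

lemma my_quad_le (hM : M.IsHermitian) (s : Finset (Fin d)) (c : ℝ)
    (hc : ∀ i ∈ s, hM.eigenvalues i ≤ c) (x : EuclideanSpace ℂ (Fin d))
    (hx : x ∈ Submodule.span ℂ (hM.eigenvectorBasis '' ↑s)) :
    Complex.re ⟪x, Matrix.toEuclideanLin M x⟫_ℂ ≤ c * ‖x‖ ^ 2 := by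
  rw [my_quad_eq hM x, my_parseval hM.eigenvectorBasis x, Finset.mul_sum]
  refine Finset.sum_le_sum fun i _ => ?_
  by_cases hi : i ∈ s
  · exact mul_le_mul_of_nonneg_right (hc i hi) (by positivity)
  · rw [my_inner_eq_zero hM.eigenvectorBasis s x hx hi]
    simp

lemma my_quad_ge (hM : M.IsHermitian) (s : Finset (Fin d)) (c : ℝ)
    (hc : ∀ i ∈ s, c ≤ hM.eigenvalues i) (x : EuclideanSpace ℂ (Fin d))
    (hx : x ∈ Submodule.span ℂ (hM.eigenvectorBasis '' ↑s)) :
    c * ‖x‖ ^ 2 ≤ Complex.re ⟪x, Matrix.toEuclideanLin M x⟫_ℂ := by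
  rw [my_quad_eq hM x, my_parseval hM.eigenvectorBasis x, Finset.mul_sum]
  refine Finset.sum_le_sum fun i _ => ?_
  by_cases hi : i ∈ s
  · exact mul_le_mul_of_nonneg_right (hc i hi) (by positivity)
  · rw [my_inner_eq_zero hM.eigenvectorBasis s x hx hi]
    simp

lemma my_finrank_span (b : OrthonormalBasis (Fin d) ℂ (EuclideanSpace ℂ (Fin d)))
    (s : Finset (Fin d)) :
    finrank ℂ (Submodule.span ℂ (b '' ↑s)) = s.card := by
  have hli : LinearIndependent ℂ (fun i : ↥(↑s : Set (Fin d)) => b i) :=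
    b.orthonormal.linearIndependent.comp Subtype.val Subtype.val_injective
  have hrange : Set.range (fun i : ↥(↑s : Set (Fin d)) => b i) = b '' ↑s := by
    ext y
    simp [Set.mem_image, Set.range, Subtype.exists]
  rw [← hrange, finrank_span_eq_card hli]
  simp

lemma my_exists_inf (U W : Submodule ℂ (EuclideanSpace ℂ (Fin d)))
    (h : d < finrank ℂ U + finrank ℂ W) : ∃ x, x ≠ 0 ∧ x ∈ U ∧ x ∈ W := by
  have hsum := Submodule.finrank_sup_add_finrank_inf_eq U W
  have hle : finrank ℂ ↥(U ⊔ W) ≤ d := by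
    have := Submodule.finrank_le (U ⊔ W)
    rwa [finrank_euclideanSpace_fin] at this
  have hpos : 0 < finrank ℂ ↥(U ⊓ W) := by omega
  obtain ⟨⟨x, hxUW⟩, hx0⟩ := Module.finrank_pos_iff_exists_ne_zero.mp hpos
  refine ⟨x, ?_, (Submodule.mem_inf.mp hxUW).1, (Submodule.mem_inf.mp hxUW).2⟩
  simpa [Submodule.mk_eq_zero] using hx0

lemma my_span_univ (b : OrthonormalBasis (Fin d) ℂ (EuclideanSpace ℂ (Fin d)))
    (x : EuclideanSpace ℂ (Fin d)) :
    x ∈ Submodule.span ℂ (b '' ↑(Finset.univ : Finset (Fin d))) := by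
  rw [Finset.coe_univ, Set.image_univ, ← b.coe_toBasis, b.toBasis.span_eq]
  trivial

lemma my_quad_le_global (hM : M.IsHermitian) (c : ℝ)
    (hc : ∀ i, hM.eigenvalues i ≤ c) (x : EuclideanSpace ℂ (Fin d)) :
    Complex.re ⟪x, Matrix.toEuclideanLin M x⟫_ℂ ≤ c * ‖x‖ ^ 2 :=
  my_quad_le hM Finset.univ c (fun i _ => hc i) x (my_span_univ _ x)

lemma my_quad_ge_global (hM : M.IsHermitian) (c : ℝ)
    (hc : ∀ i, c ≤ hM.eigenvalues i) (x : EuclideanSpace ℂ (Fin d)) :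
    c * ‖x‖ ^ 2 ≤ Complex.re ⟪x, Matrix.toEuclideanLin M x⟫_ℂ :=
  my_quad_ge hM Finset.univ c (fun i _ => hc i) x (my_span_univ _ x)

noncomputable def sortedEig (hM : M.IsHermitian) : Fin d → ℝ :=
  hM.eigenvalues ∘ Tuple.sort hM.eigenvalues

lemma weyl_core (N P : Matrix (Fin d) (Fin d) ℂ) (hM : M.IsHermitian)
    (hP : P.IsHermitian) (hMNP : P = M + N) (c : ℝ)
    (hc : ∀ x : EuclideanSpace ℂ (Fin d),
      Complex.re ⟪x, Matrix.toEuclideanLin N x⟫_ℂ ≤ c * ‖x‖ ^ 2) (a : Fin d) :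
    sortedEig hP a ≤ sortedEig hM a + c := by
  classical
  subst hMNP
  set σ := Tuple.sort hM.eigenvalues
  set τ := Tuple.sort hP.eigenvalues
  set s : Finset (Fin d) := (Finset.Iic a).image σ with hs
  set t : Finset (Fin d) := (Finset.Ici a).image τ with ht
  set U := Submodule.span ℂ (hM.eigenvectorBasis '' ↑s)
  set W := Submodule.span ℂ (hP.eigenvectorBasis '' ↑t)
  have hcardU : finrank ℂ U = (a : ℕ) + 1 := by
    rw [my_finrank_span, hs, Finset.card_image_of_injective _ σ.injective, Fin.card_Iic]
  have hcardW : finrank ℂ W = d - (a : ℕ) := by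
    rw [my_finrank_span, ht, Finset.card_image_of_injective _ τ.injective, Fin.card_Ici]
  obtain ⟨x, hx0, hxU, hxW⟩ : ∃ x, x ≠ 0 ∧ x ∈ U ∧ x ∈ W := by
    apply my_exists_inf
    rw [hcardU, hcardW]
    have := a.isLt
    omega
  have hub : Complex.re ⟪x, Matrix.toEuclideanLin M x⟫_ℂ ≤ sortedEig hM a * ‖x‖ ^ 2 := by
    refine my_quad_le hM s _ ?_ x hxU
    intro i hi
    obtain ⟨k, hk, rfl⟩ := Finset.mem_image.mp hi
    exact Tuple.monotone_sort hM.eigenvalues (Finset.mem_Iic.mp hk)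
  have hlb : sortedEig hP a * ‖x‖ ^ 2 ≤ Complex.re ⟪x, Matrix.toEuclideanLin (M + N) x⟫_ℂ := by
    refine my_quad_ge hP t _ ?_ x hxW
    intro i hi
    obtain ⟨k, hk, rfl⟩ := Finset.mem_image.mp hi
    exact Tuple.monotone_sort hP.eigenvalues (Finset.mem_Ici.mp hk)
  have hadd : Complex.re ⟪x, Matrix.toEuclideanLin (M + N) x⟫_ℂ
      = Complex.re ⟪x, Matrix.toEuclideanLin M x⟫_ℂ
        + Complex.re ⟪x, Matrix.toEuclideanLin N x⟫_ℂ := by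
    rw [map_add]
    simp [inner_add_right]
  have hx0n : (0 : ℝ) < ‖x‖ := norm_pos_iff.mpr hx0
  have hnorm : (0 : ℝ) < ‖x‖ ^ 2 := by positivity
  have hfinal : sortedEig hP a * ‖x‖ ^ 2 ≤ (sortedEig hM a + c) * ‖x‖ ^ 2 := by
    calc sortedEig hP a * ‖x‖ ^ 2
        ≤ Complex.re ⟪x, Matrix.toEuclideanLin (M + N) x⟫_ℂ := hlb
      _ = _ + _ := hadd
      _ ≤ sortedEig hM a * ‖x‖ ^ 2 + c * ‖x‖ ^ 2 := add_le_add hub (hc x)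
      _ = (sortedEig hM a + c) * ‖x‖ ^ 2 := by ring
  exact le_of_mul_le_mul_right hfinal hnorm



/-- Lidskii-type bound: if `A`, `B` are `d×d` self-adjoint complex matrices and
`μA`, `μB`, `μAB` enumerate the eigenvalues (with multiplicity, in nondecreasing
order) of `A`, `B` and `A + B` respectively, then
`|λ⁽ᵃ⁾(A+B) − λ⁽ᵃ⁾(A)| ≤ Σ_b |λ⁽ᵇ⁾(B)|` for every `a`. -/
theorem eigenvalue_perturbation_lidskii
    (d : ℕ) (A B : Matrix (Fin d) (Fin d) ℂ)
    (hA : A.IsHermitian) (hB : B.IsHermitian)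
    (μA μB μAB : Fin d → ℝ)
    (hμA : Monotone μA) (hμB : Monotone μB) (hμAB : Monotone μAB)
    (hcA : A.charpoly = ∏ i : Fin d, (Polynomial.X - Polynomial.C ((μA i : ℝ) : ℂ)))
    (hcB : B.charpoly = ∏ i : Fin d, (Polynomial.X - Polynomial.C ((μB i : ℝ) : ℂ)))
    (hcAB : (A + B).charpoly =
      ∏ i : Fin d, (Polynomial.X - Polynomial.C ((μAB i : ℝ) : ℂ))) :
    ∀ a : Fin d, |μAB a - μA a| ≤ ∑ b : Fin d, |μB b| := by
  intro a
  have hAB : (A + B).IsHermitian := hA.add hB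
  have hμAeq : μA = sortedEig hA :=
    my_monotone_eq_sort μA hA.eigenvalues hμA (by rw [← hcA, my_charpoly_hermitian hA])
  have hμBeq : μB = sortedEig hB :=
    my_monotone_eq_sort μB hB.eigenvalues hμB (by rw [← hcB, my_charpoly_hermitian hB])
  have hμABeq : μAB = sortedEig hAB :=
    my_monotone_eq_sort μAB hAB.eigenvalues hμAB (by rw [← hcAB, my_charpoly_hermitian hAB])
  set S := ∑ b : Fin d, |μB b| with hS
  have hsum : S = ∑ b : Fin d, |hB.eigenvalues b| := by
    rw [hS, hμBeq]
    exact Equiv.sum_comp (Tuple.sort hB.eigenvalues) (fun i => |hB.eigenvalues i|)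
  have habs : ∀ i, |hB.eigenvalues i| ≤ S := by
    intro i
    rw [hsum]
    exact Finset.single_le_sum (f := fun i => |hB.eigenvalues i|)
      (fun i _ => abs_nonneg _) (Finset.mem_univ i)
  have hBub : ∀ i, hB.eigenvalues i ≤ S := fun i => (le_abs_self _).trans (habs i)
  have hBlb : ∀ i, -S ≤ hB.eigenvalues i := fun i => (neg_le_neg (habs i)).trans (neg_abs_le _)
  have dir1 : μAB a ≤ μA a + S := by
    rw [hμAeq, hμABeq]
    exact weyl_core B (A + B) hA hAB rfl S (my_quad_le_global hB S hBub) a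
  have dir2 : μA a ≤ μAB a + S := by
    rw [hμAeq, hμABeq]
    refine weyl_core (-B) A hAB hA (by rw [add_neg_cancel_right]) S ?_ a
    intro x
    have h1 := my_quad_ge_global hB (-S) hBlb x
    have h2 : Complex.re ⟪x, Matrix.toEuclideanLin (-B) x⟫_ℂ
        = -Complex.re ⟪x, Matrix.toEuclideanLin B x⟫_ℂ := by
      rw [map_neg]
      simp [inner_neg_right]
    rw [h2]
    nlinarith [h1]
  rw [abs_sub_le_iff]
  constructor <;> linarith
end

section
/- Let I ⊆ ℝ be an open interval, let A : I → (d×d self-adjoint complex matrices) be a map that is differentiable at a point ε₀ ∈ I, and let λ : I → ℝ be a function, continuous on I and differentiable at ε₀, such that λ(ε) is an eigenvalue of A(ε) for every ε ∈ I. Then |λ'(ε₀)| ≤ ‖A'(ε₀)‖₂. -/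
open Matrix Filter Topology

lemma weyl_aux {d : ℕ} (hd : 0 < d) {M B : Matrix (Fin d) (Fin d) ℂ}
    (hM : M.IsHermitian) (μ : ℝ)
    (h : (B - (μ : ℂ) • 1).det = 0) :
    ∃ i, |μ - hM.eigenvalues i| ≤ ‖Matrix.toEuclideanCLM (𝕜 := ℂ) (B - M)‖ := by
  classical
  obtain ⟨v, hv0, hv⟩ := (Matrix.exists_mulVec_eq_zero_iff).2 h
  have hBv : B *ᵥ v = (μ : ℂ) • v := by
    have := hv
    rw [sub_mulVec, smul_mulVec, one_mulVec, sub_eq_zero] at this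
    exact this
  -- move to EuclideanSpace
  set w : EuclideanSpace ℂ (Fin d) := (WithLp.equiv 2 _).symm v with hw
  have hw0 : w ≠ 0 := by
    simp only [hw, ne_eq, EmbeddingLike.map_eq_zero_iff]
    rw [WithLp.equiv_symm_apply, WithLp.toLp_eq_zero]
    exact hv0
  have hBw : Matrix.toEuclideanCLM (𝕜 := ℂ) B w = (μ : ℂ) • w := by
    rw [hw, WithLp.equiv_symm_apply, Matrix.toEuclideanCLM_toLp]
    simp [Matrix.toLin'_apply, hBv]
  set e := hM.eigenvectorBasis with he
  set lamv := hM.eigenvalues with hlamv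
  have hsymm : (Matrix.toEuclideanLin M).IsSymmetric := Matrix.isHermitian_iff_isSymmetric.1 hM
  have heig : ∀ i, Matrix.toEuclideanLin M (e i) = (lamv i : ℂ) • e i := by
    intro i
    have := hM.mulVec_eigenvectorBasis i
    rw [Matrix.toEuclideanLin_apply]
    apply PiLp.ext
    intro j
    have hj := congrFun this j
    simpa [Complex.real_smul] using hj
  set u : EuclideanSpace ℂ (Fin d) :=
    Matrix.toEuclideanCLM (𝕜 := ℂ) M w - (μ : ℂ) • w with hu
  have hCLMlin : ∀ (x : EuclideanSpace ℂ (Fin d)),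
      Matrix.toEuclideanCLM (𝕜 := ℂ) M x = Matrix.toEuclideanLin M x := by
    intro x
    exact congr($(Matrix.coe_toEuclideanCLM_eq_toEuclideanLin (𝕜 := ℂ) M) x)
  have hrepr : ∀ i, e.repr u i = ((lamv i : ℂ) - μ) * e.repr w i := by
    intro i
    have hiw : (inner ℂ (e i) w : ℂ) = e.repr w i := (e.repr_apply_apply w i).symm
    rw [e.repr_apply_apply, hu, inner_sub_right, inner_smul_right, hCLMlin,
      ← hsymm (e i) w, heig i, inner_smul_left, hiw]
    simp only [Complex.conj_ofReal]
    ring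
  -- choose the minimizing index
  have : Nonempty (Fin d) := ⟨⟨0, hd⟩⟩
  obtain ⟨i₀, -, hmin⟩ := Finset.exists_min_image Finset.univ
    (fun i => |μ - lamv i|) Finset.univ_nonempty
  refine ⟨i₀, ?_⟩
  have hnorm_i : ∀ i, ‖e.repr u i‖ = |lamv i - μ| * ‖e.repr w i‖ := by
    intro i
    rw [hrepr i, norm_mul]
    congr 1
    rw [show ((lamv i : ℂ) - μ) = ((lamv i - μ : ℝ) : ℂ) by push_cast; ring]
    exact (Complex.norm_real _).trans (Real.norm_eq_abs _)
  have hsq : (|μ - lamv i₀| * ‖w‖) ^ 2 ≤ ‖u‖ ^ 2 := by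
    rw [← e.repr.norm_map u, ← e.repr.norm_map w, mul_pow, PiLp.norm_sq_eq_of_L2,
      PiLp.norm_sq_eq_of_L2, Finset.mul_sum]
    refine Finset.sum_le_sum fun i _ => ?_
    rw [hnorm_i i, mul_pow]
    have h1 : |μ - lamv i₀| ^ 2 ≤ |lamv i - μ| ^ 2 := by
      have h2 := hmin i (Finset.mem_univ i)
      rw [abs_sub_comm μ (lamv i)] at h2
      exact pow_le_pow_left₀ (abs_nonneg _) h2 2
    exact mul_le_mul_of_nonneg_right h1 (sq_nonneg _)
  have hle : |μ - lamv i₀| * ‖w‖ ≤ ‖u‖ :=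
    le_of_pow_le_pow_left₀ two_ne_zero (norm_nonneg _) hsq
  have huBM : u = Matrix.toEuclideanCLM (𝕜 := ℂ) (M - B) w := by
    rw [map_sub, ContinuousLinearMap.sub_apply, hBw, hu]
  have hub : ‖u‖ ≤ ‖Matrix.toEuclideanCLM (𝕜 := ℂ) (B - M)‖ * ‖w‖ := by
    rw [huBM, show M - B = -(B - M) from (neg_sub _ _).symm, map_neg,
      ContinuousLinearMap.neg_apply, norm_neg]
    exact (Matrix.toEuclideanCLM (𝕜 := ℂ) (B - M)).le_opNorm w
  have hwpos : (0 : ℝ) < ‖w‖ := norm_pos_iff.2 hw0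
  exact le_of_mul_le_mul_right (hle.trans hub) hwpos


lemma clm_hasDerivAt {d : ℕ} {A : ℝ → Matrix (Fin d) (Fin d) ℂ}
    {A' : Matrix (Fin d) (Fin d) ℂ} {ε₀ : ℝ}
    (hdiff : ∀ i j, HasDerivAt (fun ε => A ε i j) (A' i j) ε₀) :
    HasDerivAt (fun ε => Matrix.toEuclideanCLM (𝕜 := ℂ) (A ε))
      (Matrix.toEuclideanCLM (𝕜 := ℂ) A') ε₀ := by
  classical
  have key : ∀ M : Matrix (Fin d) (Fin d) ℂ,
      Matrix.toEuclideanCLM (𝕜 := ℂ) M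
        = ∑ i : Fin d, ∑ j : Fin d,
            M i j • Matrix.toEuclideanCLM (𝕜 := ℂ) (Matrix.single i j 1) := by
    intro M
    conv_lhs => rw [matrix_eq_sum_single M]
    rw [map_sum]
    refine Finset.sum_congr rfl fun i _ => ?_
    rw [map_sum]
    refine Finset.sum_congr rfl fun j _ => ?_
    rw [show Matrix.single i j (M i j) = M i j • Matrix.single i j 1 by
      rw [smul_single, smul_eq_mul, mul_one], _root_.map_smul]
  have h1 : HasDerivAt
      (fun ε => ∑ i : Fin d, ∑ j : Fin d,
        A ε i j • Matrix.toEuclideanCLM (𝕜 := ℂ) (Matrix.single i j 1))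
      (∑ i : Fin d, ∑ j : Fin d,
        A' i j • Matrix.toEuclideanCLM (𝕜 := ℂ) (Matrix.single i j 1)) ε₀ := by
    refine HasDerivAt.fun_sum fun i _ => HasDerivAt.fun_sum fun j _ => ?_
    exact (hdiff i j).smul_const (Matrix.toEuclideanCLM (𝕜 := ℂ) (Matrix.single i j 1))
  have h2 : (fun ε => ∑ i : Fin d, ∑ j : Fin d,
      A ε i j • Matrix.toEuclideanCLM (𝕜 := ℂ) (Matrix.single i j 1))
      = fun ε => Matrix.toEuclideanCLM (𝕜 := ℂ) (A ε) := funext fun ε => (key (A ε)).symm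
  rw [h2, ← key A'] at h1
  exact h1

/-- If `A(ε)` is a family of `d×d` self-adjoint complex matrices on an open
interval `I = (a, b)`, differentiable (entrywise) at `ε₀ ∈ I` with derivative
`A'`, and `λ(ε)` is a continuous function on `I`, differentiable at `ε₀`, which
is an eigenvalue of `A(ε)` for every `ε ∈ I`, then `|λ'(ε₀)| ≤ ‖A'‖₂`. -/
theorem eigenvalue_derivative_bound
    (d : ℕ) (a b : ℝ) (ε₀ : ℝ) (hε₀ : ε₀ ∈ Set.Ioo a b)
    (A : ℝ → Matrix (Fin d) (Fin d) ℂ) (A' : Matrix (Fin d) (Fin d) ℂ)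
    (hherm : ∀ ε ∈ Set.Ioo a b, (A ε).IsHermitian)
    (hdiff : ∀ i j, HasDerivAt (fun ε => A ε i j) (A' i j) ε₀)
    (lam : ℝ → ℝ) (lam' : ℝ)
    (hcont : ContinuousOn lam (Set.Ioo a b))
    (hlam : HasDerivAt lam lam' ε₀)
    (heig : ∀ ε ∈ Set.Ioo a b, Matrix.det (A ε - ((lam ε : ℂ) • 1)) = 0) :
    |lam'| ≤ ‖Matrix.toEuclideanCLM (𝕜 := ℂ) A'‖ := by
  classical
  -- d = 0 is impossible
  rcases Nat.eq_zero_or_pos d with hd | hd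
  · exfalso
    have := heig ε₀ hε₀
    subst hd
    rw [Matrix.det_fin_zero] at this
    exact one_ne_zero this
  by_contra hcon
  push_neg at hcon
  set T' := Matrix.toEuclideanCLM (𝕜 := ℂ) A' with hT'
  set g := fun ε => Matrix.toEuclideanCLM (𝕜 := ℂ) (A ε) with hg
  set c : ℝ := (‖T'‖ + |lam'|) / 2 with hc
  have hc1 : ‖T'‖ < c := by rw [hc]; linarith
  have hc2 : c < |lam'| := by rw [hc]; linarith
  have hcpos : 0 < c := lt_of_le_of_lt (norm_nonneg _) hc1
  -- spectral gap at ε₀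
  have h0 : (A ε₀).IsHermitian := hherm ε₀ hε₀
  set lam0 := lam ε₀ with hlam0
  obtain ⟨δ, hδpos, hδ⟩ : ∃ δ > 0, ∀ i, h0.eigenvalues i ≠ lam0 → δ ≤ |h0.eigenvalues i - lam0| := by
    set s : Finset (Fin d) := Finset.univ.filter (fun i => h0.eigenvalues i ≠ lam0) with hs
    rcases s.eq_empty_or_nonempty with hse | hsn
    · exact ⟨1, one_pos, fun i hi => absurd (by simp [hs, hi] : i ∈ s) (by simp [hse])⟩
    · refine ⟨s.inf' hsn (fun i => |h0.eigenvalues i - lam0|), ?_, ?_⟩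
      · rw [gt_iff_lt, Finset.lt_inf'_iff]
        intro i hi
        rw [hs, Finset.mem_filter] at hi
        exact abs_pos.2 (sub_ne_zero.2 hi.2)
      · intro i hi
        exact Finset.inf'_le _ (by simp [hs, hi])
  -- derivative facts
  have hgd : HasDerivAt g T' ε₀ := clm_hasDerivAt hdiff
  have hgslope := hasDerivAt_iff_tendsto_slope.1 hgd
  have hlslope := hasDerivAt_iff_tendsto_slope.1 hlam
  -- eventually statements on the punctured neighborhood
  have E1 : ∀ᶠ ε in 𝓝[≠] ε₀, ε ∈ Set.Ioo a b :=
    eventually_nhdsWithin_of_eventually_nhds (isOpen_Ioo.eventually_mem hε₀)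
  have E2 : ∀ᶠ ε in 𝓝[≠] ε₀, ‖slope g ε₀ ε‖ < c :=
    (hgslope.norm.eventually_lt_const hc1)
  have E3 : ∀ᶠ ε in 𝓝[≠] ε₀, c < |slope lam ε₀ ε| :=
    ((hlslope.norm.eventually_const_lt (by simpa using hc2)))
  have E4 : ∀ᶠ ε in 𝓝[≠] ε₀, |lam ε - lam0| < δ / 2 := by
    have hca : ContinuousAt lam ε₀ := hlam.continuousAt
    have : ∀ᶠ ε in 𝓝 ε₀, |lam ε - lam0| < δ / 2 := by
      have := Metric.tendsto_nhds.1 hca (δ / 2) (by linarith)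
      simpa [Real.dist_eq, hlam0] using this
    exact eventually_nhdsWithin_of_eventually_nhds this
  have E5 : ∀ᶠ ε in 𝓝[≠] ε₀, |ε - ε₀| < δ / (2 * c) := by
    have : ∀ᶠ ε in 𝓝 ε₀, |ε - ε₀| < δ / (2 * c) := by
      have := Metric.ball_mem_nhds ε₀ (by positivity : (0:ℝ) < δ / (2 * c))
      filter_upwards [this] with ε hε
      simpa [Real.dist_eq] using hε
    exact eventually_nhdsWithin_of_eventually_nhds this
  have E6 : ∀ᶠ ε in 𝓝[≠] ε₀, ε ≠ ε₀ := eventually_mem_nhdsWithin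
  -- pick a point
  obtain ⟨ε, h1, h2, h3, h4, h5, h6⟩ :=
    (E1.and (E2.and (E3.and (E4.and (E5.and E6))))).exists
  have h6' : ε ≠ ε₀ := h6
  have habs : (0:ℝ) < |ε - ε₀| := abs_pos.2 (sub_ne_zero.2 h6')
  -- translate slopes into difference bounds
  have hsg : ‖g ε - g ε₀‖ = |ε - ε₀| * ‖slope g ε₀ ε‖ := by
    rw [slope_def_module, norm_smul, Real.norm_eq_abs, abs_inv,
      ← mul_assoc, mul_inv_cancel₀ habs.ne', one_mul]
  have hgdiff : ‖g ε - g ε₀‖ < c * |ε - ε₀| := by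
    rw [hsg, mul_comm]
    exact mul_lt_mul_of_pos_right h2 habs
  have hsl : |lam ε - lam0| = |ε - ε₀| * |slope lam ε₀ ε| := by
    rw [slope_def_field, abs_div, mul_comm, div_mul_cancel₀ _ habs.ne']
  have hldiff : c * |ε - ε₀| < |lam ε - lam0| := by
    rw [hsl, mul_comm c]
    exact mul_lt_mul_of_pos_left h3 habs
  -- Weyl inequality at ε
  obtain ⟨i, hi⟩ := weyl_aux hd h0 (lam ε) (heig ε h1)
  have hBM : Matrix.toEuclideanCLM (𝕜 := ℂ) (A ε - A ε₀) = g ε - g ε₀ := by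
    rw [map_sub]
  rw [hBM] at hi
  have hi2 : |lam ε - h0.eigenvalues i| < c * |ε - ε₀| := lt_of_le_of_lt hi hgdiff
  have hne : h0.eigenvalues i ≠ lam0 := by
    intro heq
    rw [heq] at hi2
    exact absurd (hi2.trans hldiff) (lt_irrefl _)
  have hgap := hδ i hne
  have htri : |h0.eigenvalues i - lam0| ≤ |lam ε - h0.eigenvalues i| + |lam ε - lam0| := by
    calc |h0.eigenvalues i - lam0| ≤ |h0.eigenvalues i - lam ε| + |lam ε - lam0| :=
          abs_sub_le _ _ _
      _ = |lam ε - h0.eigenvalues i| + |lam ε - lam0| := by rw [abs_sub_comm]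
  have hsmall : c * |ε - ε₀| < δ / 2 := by
    have h7 := mul_lt_mul_of_pos_left h5 hcpos
    have heq : c * (δ / (2 * c)) = δ / 2 := by
      field_simp
    linarith
  linarith
end
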